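/- arXiv:0704.1969 — 5 statements merged into one kernel-verified Lean document; each statement's English description precedes it below -/
import Mathlib

section
/- Let u and v be snakeshapes of size n ≥ 2. Then N_{u,v} = 0 if and only if u = (1,1,…,1,2), consisting of n−2 parts equal to 1 followed by a final part equal to 2, and the first part of v equals 2. -/
/-- A snakeshape: a composition all of whose parts equal 1 or 2, recorded as the
list of column heights, read left to right. -/
def IsSnakeshape (u : List ℕ) : Prop := ∀ p ∈ u, p = 1 ∨ p = 2

/-- The shape (list of column heights, left to right) of a tableau given as a
list of columns, each column listed top to bottom. -/
def shapeOf (t : List (List ℕ)) : List ℕ := t.map List.length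

/-- `t` is a standard Young–Fibonacci tableau of size `n`: columns are listed left
to right, each column top to bottom; every column has height 1 or 2; in each
column the top entry exceeds the bottom entry; every topmost entry exceeds all
entries in columns strictly to its right; and the entries are exactly `1,…,n`. -/
def IsYFT (n : ℕ) (t : List (List ℕ)) : Prop :=
  (∀ c ∈ t, c.length = 1 ∨ c.length = 2) ∧
  (∀ c ∈ t, List.Chain' (fun a b => b < a) c) ∧
  (∀ i j : ℕ, i < j → j < t.length →
    ∀ a ∈ (t.getD i []).head?, ∀ x ∈ t.getD j [], x < a) ∧
  (t.flatten).Perm (List.range' 1 n)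

/-- Auxiliary, fuelled version of the Young–Fibonacci insertion: reading the word
from right to left, each letter read gets matched to the largest not-yet-matched
letter occurring strictly to its left which exceeds it (forming a height-2 column,
larger letter on top), and otherwise stays single (a height-1 column); columns are
listed in the order in which their status was settled. -/
def insertColsAux : ℕ → List ℕ → List (List ℕ)
  | 0, _ => []
  | _, [] => []
  | fuel+1, w =>
    let x := w.getLast!
    let w' := w.dropLast
    match (w'.filter (fun y => decide (x < y))).max? with
    | none => [x] :: insertColsAux fuel w'
    | some m => [m, x] :: insertColsAux fuel (w'.erase m)

/-- The Young–Fibonacci insertion tableau of a word. -/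
def insertCols (w : List ℕ) : List (List ℕ) := insertColsAux w.length w

/-- The word `σ(1)⋯σ(n)` of a permutation of `{1,…,n}` (letters `1,…,n`). -/
def permWord {n : ℕ} (σ : Equiv.Perm (Fin n)) : List ℕ :=
  List.ofFn (fun i => (σ i : ℕ) + 1)

/-- min(t): read the columns right to left, each column top to bottom. -/
def minWord (t : List (List ℕ)) : List ℕ := t.reverse.flatten

/-- max(t): the top row left to right, then the bottom row right to left. -/
def maxWord (t : List (List ℕ)) : List ℕ :=
  (t.filterMap fun c => if c.length = 2 then c.head? else none) ++
    (t.filterMap List.getLast?).reverse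

/-- Number of inversions of a word: pairs of positions `p < q` with `w p > w q`. -/
def invCount (w : List ℕ) : ℕ :=
  ((Finset.range w.length ×ˢ Finset.range w.length).filter
    (fun p => p.1 < p.2 ∧ w.getD p.2 0 < w.getD p.1 0)).card

/-- `w'` is obtained from `w` by swapping two adjacent letters `x < y` (in this
order in `w`), thus creating exactly one more inversion. -/
def AdjSwap (w w' : List ℕ) : Prop :=
  ∃ l r : List ℕ, ∃ x y : ℕ, x < y ∧ w = l ++ x :: y :: r ∧ w' = l ++ y :: x :: r

/-- The (right) weak order on words. -/
def WordWeakLe (w w' : List ℕ) : Prop := Relation.ReflTransGen AdjSwap w w'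

/-- `Shift t t'`: `t'` is obtained from `t` by shifting one entry. Columns are
listed top to bottom, so `[b, a]` is the column with top `b`, bottom `a`. -/
inductive Shift : List (List ℕ) → List (List ℕ) → Prop
  /-- the bottom entry `a` of a height-2 column bumps up the single entry `c` of
  the column on its left; the top entry `b` falls down. -/
  | bump2 (l r : List (List ℕ)) (c b a : ℕ) :
      Shift (l ++ [[c], [b, a]] ++ r) (l ++ [[c, a], [b]] ++ r)
  /-- the entry `a` of a height-1 column bumps up the single entry `c` of the
  column on its left; its own column disappears. -/
  | bump1 (l r : List (List ℕ)) (c a : ℕ) :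
      Shift (l ++ [[c], [a]] ++ r) (l ++ [[c, a]] ++ r)
  /-- `a < c` replaces `c` at the bottom of the height-2 column on its left, and
  `c < b` takes the former place of `a`. -/
  | exch (l r : List (List ℕ)) (d c b a : ℕ) (h1 : a < c) (h2 : c < b) :
      Shift (l ++ [[d, c], [b, a]] ++ r) (l ++ [[d, a], [b, c]] ++ r)
  /-- `a < c` replaces `c` at the bottom of the height-2 column on its left; since
  `b < c`, `c` becomes a new height-1 column in between and `b` falls down. -/
  | split2 (l r : List (List ℕ)) (d c b a : ℕ) (h1 : a < c) (h2 : b < c) :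
      Shift (l ++ [[d, c], [b, a]] ++ r) (l ++ [[d, a], [c], [b]] ++ r)
  /-- `a < c` replaces `c` at the bottom of the height-2 column on its left; `c`
  becomes a new height-1 column and the height-1 column of `a` disappears. -/
  | split1 (l r : List (List ℕ)) (d c a : ℕ) (h1 : a < c) :
      Shift (l ++ [[d, c], [a]] ++ r) (l ++ [[d, a], [c]] ++ r)

/-- The bottom row of a tableau, read left to right: the bottom entries of the
height-2 columns together with the entries of the height-1 columns. -/
def bottomRow (t : List (List ℕ)) : List ℕ := t.filterMap List.getLast?

/-- Generating relations of the canonical poset `P_t`: `canoGen t x y` means `x`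
is covered... i.e. `x <_P y` is a generating relation: consecutive bottom-row
entries read right to left (rightmost lowest), and each top entry of a height-2
column below the corresponding bottom entry. -/
def canoGen (t : List (List ℕ)) (x y : ℕ) : Prop :=
  (∃ i : ℕ, i + 1 < (bottomRow t).length ∧
    (bottomRow t).getD (i + 1) 0 = x ∧ (bottomRow t).getD i 0 = y) ∨
  (∃ c ∈ t, c.length = 2 ∧ c.head? = some x ∧ c.getLast? = some y)

/-- `w` is (the word of) a linear extension of the canonical poset `P_t`. -/
def IsLinExt (t : List (List ℕ)) (w : List ℕ) : Prop :=
  ∀ x y : ℕ, Relation.ReflTransGen (canoGen t) x y → x ≠ y →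
    w.idxOf x < w.idxOf y

/-- The set of inversions of a word: pairs `(j, i)` with `i < j` such that `j`
occurs before `i`. -/
def InvSet (w : List ℕ) : Set (ℕ × ℕ) :=
  {p | p.2 < p.1 ∧ p.1 ∈ w ∧ p.2 ∈ w ∧ w.idxOf p.1 < w.idxOf p.2}

/-- The set of non-inversions of a word: pairs `(i, j)` with `i < j` such that `i`
occurs before `j`. -/
def NonInvSet (w : List ℕ) : Set (ℕ × ℕ) :=
  {p | p.1 < p.2 ∧ p.1 ∈ w ∧ p.2 ∈ w ∧ w.idxOf p.1 < w.idxOf p.2}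

/-- The row canonical tableau of shape `u` (size `n`): topmost cells are labelled
`n, n-1, …` from left to right, bottom cells of height-2 columns are labelled
`1, 2, …` from left to right. -/
def rTcols (n : ℕ) (u : List ℕ) : List (List ℕ) :=
  (List.range u.length).map (fun i =>
    if u.getD i 0 = 2 then [n - i, (u.take i).count 2 + 1] else [n - i])

/-- The column canonical tableau of shape `u`: cells are labelled `1, 2, …` taking
columns right to left, in each column the bottom cell before the top cell. -/
def cTcols (u : List ℕ) : List (List ℕ) :=
  (List.range u.length).map (fun i =>
    let s := u.sum - (u.take (i + 1)).sum
    if u.getD i 0 = 2 then [s + 2, s + 1] else [s + 1])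

/-- `t` is a semistandard Young–Fibonacci tableau of shape `u`: entries are
positive integers, in each column the top entry strictly exceeds the bottom one,
and every topmost entry is `≥` all entries in columns strictly to its right. -/
def IsSSYFT (u : List ℕ) (t : List (List ℕ)) : Prop :=
  shapeOf t = u ∧
  (∀ c ∈ t, List.Chain' (fun a b => b < a) c) ∧
  (∀ i j : ℕ, i < j → j < t.length →
    ∀ a ∈ (t.getD i []).head?, ∀ x ∈ t.getD j [], x ≤ a) ∧
  (∀ x ∈ t.flatten, 1 ≤ x)

/-- `t` has content `v`: for each `i`, `t` has exactly `v_i` entries equal to `i`.-/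
def ContentIs (v : List ℕ) (t : List (List ℕ)) : Prop :=
  ∀ i : ℕ, t.flatten.count (i + 1) = v.getD i 0

/-- The Young–Fibonacci number `N_{u,v}`: the number of semistandard
Young–Fibonacci tableaux of shape `u` and content `v`. -/
noncomputable def YFNumber (u v : List ℕ) : ℕ :=
  Nat.card {t : List (List ℕ) // IsSSYFT u t ∧ ContentIs v t}

/-- The multiset (as a list indexed by positions) `v^{1-}`: delete a part equal
to 1, or decrease a larger part by 1. -/
def vMinus (v : List ℕ) : List (List ℕ) :=
  (List.range v.length).map (fun p =>
    if v.getD p 0 = 1 then v.eraseIdx p else v.set p (v.getD p 0 - 1))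

/-- The list of snakeshapes covering `u` in the Young–Fibonacci lattice:
(i) prepend a part 1; (ii) replace the leftmost part equal to 1 by a 2;
(iii) if `u` starts with `k ≥ 1` parts equal to 2, insert a part 1 just after the
`i`-th part, `1 ≤ i ≤ k`. -/
def coversList (u : List ℕ) : List (List ℕ) :=
  [1 :: u] ++
    (if (u.takeWhile (fun p => decide (p = 2))).length < u.length then
      [u.take (u.takeWhile (fun p => decide (p = 2))).length ++
        2 :: u.drop ((u.takeWhile (fun p => decide (p = 2))).length + 1)]
    else []) ++
    ((List.range (u.takeWhile (fun p => decide (p = 2))).length).map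
      (fun i => u.insertIdx (i + 1) 1))

/-- Okada's analogue of the Kostka numbers (fuelled implementation of the
defining recurrences; `v.length` is enough fuel). -/
def OkadaKAux : ℕ → List ℕ → List ℕ → ℕ
  | _, [], [] => 1
  | fuel+1, 1 :: u, 1 :: v => OkadaKAux fuel u v
  | fuel+1, 2 :: u, 2 :: v => OkadaKAux fuel u v
  | _+1, 1 :: _, 2 :: _ => 0
  | fuel+1, 2 :: u, 1 :: v => ((coversList u).map (fun w => OkadaKAux fuel w v)).sum
  | _, _, _ => 0

/-- Okada's analogue `K_{u,v}` of the Kostka numbers, determined by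
`K_{∅,∅} = 1`, `K_{1u,1v} = K_{u,v}`, `K_{2u,2v} = K_{u,v}`, `K_{1u,2v} = 0` and
`K_{2u,1v} = Σ_{w covers u} K_{w,v}`. -/
def OkadaK (u v : List ℕ) : ℕ := OkadaKAux v.length u v

/-- The cells of a snakeshape `u`: pairs `(i, r)` with `i` the (0-based) column
index and `r = 0` for the bottom cell, `r = 1` for the top cell. -/
def cellsFinset (u : List ℕ) : Finset (ℕ × ℕ) :=
  (Finset.range u.length ×ˢ Finset.range 2).filter (fun p => p.2 < u.getD p.1 0)

/-- Generating relations of the poset `P_u` on the cells of `u`: the bottom-row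
cells read right to left form a chain (rightmost lowest), and the top cell of
each height-2 column lies strictly below its bottom cell. -/
def cellGen (u : List ℕ) (c c' : ℕ × ℕ) : Prop :=
  (∃ i : ℕ, i + 1 < u.length ∧ c = (i + 1, 0) ∧ c' = (i, 0)) ∨
  (∃ i : ℕ, i < u.length ∧ u.getD i 0 = 2 ∧ c = (i, 1) ∧ c' = (i, 0))

/-- The order relation of the poset `P_u`. -/
def cellLe (u : List ℕ) (c c' : ℕ × ℕ) : Prop :=
  Relation.ReflTransGen (cellGen u) c c'
/-! ### Auxiliary development for Statement 7 -/

section YFAux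

private lemma snake_sum {u : List ℕ} (hu : IsSnakeshape u) :
    u.sum = u.length + u.count 2 := by
  induction u with
  | nil => simp
  | cons p u ih =>
    have hp := hu p (by simp)
    have hu' : IsSnakeshape u := fun q hq => hu q (List.mem_cons_of_mem _ hq)
    rcases hp with rfl | rfl <;> simp [List.count_cons, ih hu'] <;> omega

/-- The weakly decreasing word with `v.getD i 0` letters equal to `i+1`. -/
private def cWordAux : List ℕ → ℕ → List ℕ
  | [], _ => []
  | m :: r, val => List.replicate m val ++ cWordAux r (val - 1)

private def cWord (v : List ℕ) : List ℕ := cWordAux v.reverse v.length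

private lemma cWord_nil : cWord [] = [] := rfl

private lemma cWord_concat (v : List ℕ) (m : ℕ) :
    cWord (v ++ [m]) = List.replicate m (v.length + 1) ++ cWord v := by
  simp [cWord, cWordAux]

private lemma cWord_length (v : List ℕ) : (cWord v).length = v.sum := by
  induction v using List.reverseRecOn with
  | nil => rfl
  | append_singleton v m ih => simp [cWord_concat, ih]; omega

private lemma cWord_mem_le {v : List ℕ} {x : ℕ} (hx : x ∈ cWord v) : x ≤ v.length := by
  induction v using List.reverseRecOn with
  | nil => simp [cWord_nil] at hx
  | append_singleton v m ih =>
    rw [cWord_concat] at hx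
    rcases List.mem_append.1 hx with h | h
    · have := List.eq_of_mem_replicate h
      simp [this]
    · have := ih h
      simp; omega

private lemma cWord_mem_pos {v : List ℕ} {x : ℕ} (hx : x ∈ cWord v) : 1 ≤ x := by
  induction v using List.reverseRecOn with
  | nil => simp [cWord_nil] at hx
  | append_singleton v m ih =>
    rw [cWord_concat] at hx
    rcases List.mem_append.1 hx with h | h
    · have := List.eq_of_mem_replicate h; omega
    · exact ih h

private lemma cWord_pairwise (v : List ℕ) :
    (cWord v).Pairwise (fun a b => b ≤ a) := by
  induction v using List.reverseRecOn with
  | nil => simp [cWord_nil]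
  | append_singleton v m ih =>
    rw [cWord_concat, List.pairwise_append]
    refine ⟨List.pairwise_replicate.2 (Or.inr le_rfl), ih, ?_⟩
    intro a ha b hb
    have ha' := List.eq_of_mem_replicate ha
    have hb' := cWord_mem_le hb
    omega

private lemma cWord_count (v : List ℕ) (i : ℕ) :
    (cWord v).count (i + 1) = v.getD i 0 := by
  induction v using List.reverseRecOn with
  | nil => simp [cWord_nil]
  | append_singleton v m ih =>
    rw [cWord_concat, List.count_append, List.count_replicate, ih]
    by_cases h1 : i = v.length
    · subst h1
      have hout : v.getD v.length 0 = 0 := List.getD_eq_default _ _ le_rfl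
      rw [List.getD_append_right _ _ _ _ le_rfl]
      simp [hout]
    · have hne' : ¬((v.length + 1 : ℕ) == i + 1) = true := by simp; omega
      rw [if_neg hne']
      by_cases h2 : i < v.length
      · rw [List.getD_append _ _ _ _ h2]
        omega
      · have hge : v.length ≤ i := by omega
        have e1 : v.getD i 0 = 0 := List.getD_eq_default _ _ hge
        have e2 : (v ++ [m]).getD i 0 = 0 := List.getD_eq_default _ _ (by simp; omega)
        omega

private lemma cWord_anti {v : List ℕ} {a b : ℕ} (hab : a ≤ b) (hb : b < (cWord v).length) :
    (cWord v).getD b 0 ≤ (cWord v).getD a 0 := by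
  rcases eq_or_lt_of_le hab with rfl | h
  · exact le_rfl
  · have hp := (List.pairwise_iff_getElem).1 (cWord_pairwise v)
    rw [List.getD_eq_getElem _ _ hb, List.getD_eq_getElem _ _ (lt_trans h hb)]
    exact hp a b (lt_trans h hb) hb h

private lemma cWord_getD_mem {v : List ℕ} {a : ℕ} (ha : a < (cWord v).length) :
    (cWord v).getD a 0 ∈ cWord v := by
  rw [List.getD_eq_getElem _ _ ha]; exact List.getElem_mem _

private lemma cWord_count_le {v : List ℕ} (hv : IsSnakeshape v) (x : ℕ) :
    (cWord v).count x ≤ 2 := by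
  by_cases hx : 1 ≤ x
  · have hc := cWord_count v (x - 1)
    rw [show x - 1 + 1 = x by omega] at hc
    rw [hc]
    by_cases h : x - 1 < v.length
    · rw [List.getD_eq_getElem _ _ h]
      rcases hv _ (List.getElem_mem h) with h' | h' <;> omega
    · rw [List.getD_eq_default _ _ (by omega)]; omega
  · have : x ∉ cWord v := fun h => hx (cWord_mem_pos h)
    rw [List.count_eq_zero.2 this]
    omega

/-- Key inequality: letters at distance ≥ 2 in a weakly decreasing word with all
multiplicities ≤ 2 are strictly decreasing. -/
private lemma word_gap {w : List ℕ}
    (hanti : ∀ a b : ℕ, a ≤ b → b < w.length → w.getD b 0 ≤ w.getD a 0)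
    (hcnt2 : ∀ x : ℕ, w.count x ≤ 2) :
    ∀ a b : ℕ, a + 2 ≤ b → b < w.length → w.getD b 0 < w.getD a 0 := by
  intro a b hab hb
  by_contra hcon
  push_neg at hcon
  have q0 : w.getD (a+1) 0 ≤ w.getD a 0 := hanti _ _ (by omega) (by omega)
  have q1 : w.getD (a+1+1) 0 ≤ w.getD (a+1) 0 := hanti _ _ (by omega) (by omega)
  have q2 : w.getD b 0 ≤ w.getD (a+1+1) 0 := hanti _ _ (by omega) (by omega)
  have e1 : w.getD (a+1) 0 = w.getD a 0 := by omega
  have e2 : w.getD (a+1+1) 0 = w.getD a 0 := by omega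
  have k1 : w.drop a = w.getD a 0 :: w.drop (a+1) := by
    rw [List.drop_eq_getElem_cons (show a < w.length by omega),
        List.getD_eq_getElem w 0 (show a < w.length by omega)]
  have k2 : w.drop (a+1) = w.getD (a+1) 0 :: w.drop (a+1+1) := by
    rw [List.drop_eq_getElem_cons (show a + 1 < w.length by omega),
        List.getD_eq_getElem w 0 (show a + 1 < w.length by omega)]
  have k3 : w.drop (a+1+1) = w.getD (a+1+1) 0 :: w.drop (a+1+1+1) := by
    rw [List.drop_eq_getElem_cons (show a + 1 + 1 < w.length by omega),
        List.getD_eq_getElem w 0 (show a + 1 + 1 < w.length by omega)]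
  have hcnt : 3 ≤ (w.drop a).count (w.getD a 0) := by
    rw [k1, k2, k3, e1, e2]
    simp only [List.count_cons_self]
    omega
  have hle : (w.drop a).count (w.getD a 0) ≤ w.count (w.getD a 0) :=
    (List.drop_sublist a w).count_le _
  have := hcnt2 (w.getD a 0)
  omega

/-- If the word has exactly one letter `1` and all letters positive, the last two
letters are strictly decreasing. -/
private lemma word_last2 {w : List ℕ}
    (hanti : ∀ a b : ℕ, a ≤ b → b < w.length → w.getD b 0 ≤ w.getD a 0)
    (h1cnt : w.count 1 = 1) (hpos : ∀ x ∈ w, 1 ≤ x) (hlen : 2 ≤ w.length) :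
    w.getD (w.length - 1) 0 < w.getD (w.length - 2) 0 := by
  by_contra hcon
  push_neg at hcon
  have q0 : w.getD (w.length - 1) 0 ≤ w.getD (w.length - 2) 0 :=
    hanti _ _ (by omega) (by omega)
  have h1mem : (1 : ℕ) ∈ w := List.count_pos_iff.1 (by omega)
  obtain ⟨j, hj, hje⟩ := List.getElem_of_mem h1mem
  have hle1 : w.getD (w.length - 1) 0 ≤ 1 := by
    have := hanti j (w.length - 1) (by omega) (by omega)
    rw [List.getD_eq_getElem _ _ hj, hje] at this
    exact this
  have hge1 : 1 ≤ w.getD (w.length - 1) 0 := by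
    apply hpos
    rw [List.getD_eq_getElem _ _ (show w.length - 1 < w.length by omega)]
    exact List.getElem_mem _
  have hx1 : w.getD (w.length - 1) 0 = 1 := by omega
  have hx2 : w.getD (w.length - 2) 0 = 1 := by omega
  have hd1 : w.length - 2 < w.length := by omega
  have hd2 : w.length - 1 < w.length := by omega
  have e1 : w.length - 2 + 1 = w.length - 1 := by omega
  have key : w.drop (w.length - 2) = [w.getD (w.length - 2) 0, w.getD (w.length - 1) 0] := by
    rw [List.drop_eq_getElem_cons hd1, e1, List.drop_eq_getElem_cons hd2,
        show w.length - 1 + 1 = w.length from by omega, List.drop_length,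
        ← List.getD_eq_getElem w 0 hd1, ← List.getD_eq_getElem w 0 hd2]
  rw [hx1, hx2] at key
  have hcnt : 2 ≤ (w.drop (w.length - 2)).count 1 := by
    rw [key]
    simp only [List.count_cons_self]
    omega
  have hle : (w.drop (w.length - 2)).count 1 ≤ w.count 1 :=
    (List.drop_sublist _ w).count_le _
  omega

/-- Fill shape `u` with letters of `w`: tops take indices `i, i+1, …`, bottoms of
height-2 columns take indices `c, c+1, …`. -/
private def fillAux (w : List ℕ) : List ℕ → ℕ → ℕ → List (List ℕ)
  | [], _, _ => []
  | p :: u, i, c =>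
    (if p = 2 then [w.getD i 0, w.getD c 0] else [w.getD i 0]) ::
      fillAux w u (i + 1) (if p = 2 then c + 1 else c)

private lemma fillAux_nil (w : List ℕ) (i c : ℕ) : fillAux w [] i c = [] := rfl

private lemma fillAux_cons (w : List ℕ) (q : ℕ) (u : List ℕ) (i c : ℕ) :
    fillAux w (q :: u) i c =
      (if q = 2 then [w.getD i 0, w.getD c 0] else [w.getD i 0]) ::
        fillAux w u (i + 1) (if q = 2 then c + 1 else c) := rfl

private lemma fillAux_shape (w : List ℕ) (u : List ℕ) :
    ∀ i c, IsSnakeshape u → shapeOf (fillAux w u i c) = u := by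
  induction u with
  | nil => intro i c _; rfl
  | cons p u ih =>
    intro i c hu
    have hu' : IsSnakeshape u := fun q hq => hu q (List.mem_cons_of_mem _ hq)
    rcases hu p (by simp) with rfl | rfl
    · have ih' := ih (i+1) c hu'
      simp only [shapeOf] at ih'
      simp only [fillAux_cons, shapeOf, List.map_cons,
        if_neg (by norm_num : ¬(1:ℕ) = 2)]
      simp [ih']
    · have ih' := ih (i+1) (c+1) hu'
      simp only [shapeOf] at ih'
      simp only [fillAux_cons, shapeOf, List.map_cons, if_pos rfl]
      simp [ih']

private lemma fillAux_memIdx (w : List ℕ) (u : List ℕ) :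
    ∀ i c, i + u.length ≤ c → c + u.count 2 ≤ w.length →
    ∀ x ∈ (fillAux w u i c).flatten, ∃ p, i ≤ p ∧ p < w.length ∧ x = w.getD p 0 := by
  induction u with
  | nil => intro i c _ _ x hx; simp [fillAux_nil] at hx
  | cons q u ih =>
    intro i c h1 h2 x hx
    rw [List.length_cons] at h1
    by_cases hq : q = 2
    · subst hq
      rw [List.count_cons_self] at h2
      rw [fillAux_cons, if_pos rfl] at hx
      rw [List.flatten_cons] at hx
      rcases List.mem_append.1 hx with hx | hx
      · rcases (by simpa using hx : x = w.getD i 0 ∨ x = w.getD c 0) with rfl | rfl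
        · exact ⟨i, le_rfl, by omega, rfl⟩
        · exact ⟨c, by omega, by omega, rfl⟩
      · obtain ⟨p, hp1, hp2, hp3⟩ := ih (i+1) (c+1) (by omega) (by omega) x hx
        exact ⟨p, by omega, hp2, hp3⟩
    · have hcnt : (q :: u).count 2 = u.count 2 := List.count_cons_of_ne hq
      rw [hcnt] at h2
      rw [fillAux_cons, if_neg hq, if_neg hq] at hx
      rw [List.flatten_cons] at hx
      rcases List.mem_append.1 hx with hx | hx
      · rcases (by simpa using hx : x = w.getD i 0) with rfl
        exact ⟨i, le_rfl, by omega, rfl⟩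
      · obtain ⟨p, hp1, hp2, hp3⟩ := ih (i+1) c (by omega) (by omega) x hx
        exact ⟨p, by omega, hp2, hp3⟩

private lemma fillAux_dom (w : List ℕ)
    (hanti : ∀ a b : ℕ, a ≤ b → b < w.length → w.getD b 0 ≤ w.getD a 0)
    (u : List ℕ) :
    ∀ i c, i + u.length ≤ c → c + u.count 2 ≤ w.length →
    ∀ a b : ℕ, a < b → b < (fillAux w u i c).length →
      ∀ top ∈ ((fillAux w u i c).getD a []).head?,
        ∀ x ∈ (fillAux w u i c).getD b [], x ≤ top := by
  induction u with
  | nil => intro i c _ _ a b hab hb; rw [fillAux_nil] at hb; simp at hb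
  | cons q u ih =>
    intro i c h1 h2 a b hab hb top htop x hx
    rw [List.length_cons] at h1
    have inv1 : (i + 1) + u.length ≤ (if q = 2 then c + 1 else c) := by
      split_ifs <;> omega
    have inv2 : (if q = 2 then c + 1 else c) + u.count 2 ≤ w.length := by
      by_cases hq : q = 2
      · subst hq; rw [List.count_cons_self] at h2; rw [if_pos rfl]; omega
      · rw [List.count_cons_of_ne hq] at h2; rw [if_neg hq]; omega
    obtain ⟨b', rfl⟩ : ∃ b', b = b' + 1 := ⟨b - 1, by omega⟩
    rw [fillAux_cons] at hb htop hx
    match a, htop with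
    | 0, htop =>
      rw [List.getD_cons_zero] at htop
      have hhead : ((if q = 2 then [w.getD i 0, w.getD c 0] else [w.getD i 0]) : List ℕ).head?
          = some (w.getD i 0) := by split <;> rfl
      rw [hhead] at htop
      have htop' : w.getD i 0 = top := by simpa using htop
      rw [List.getD_cons_succ] at hx
      rw [List.length_cons] at hb
      have hb' : b' < (fillAux w u (i+1) (if q = 2 then c + 1 else c)).length := by omega
      have hcol : (fillAux w u (i+1) (if q = 2 then c + 1 else c)).getD b' []
          ∈ fillAux w u (i+1) (if q = 2 then c + 1 else c) := by
        rw [List.getD_eq_getElem _ _ hb']; exact List.getElem_mem _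
      have hxf : x ∈ (fillAux w u (i+1) (if q = 2 then c + 1 else c)).flatten :=
        List.mem_flatten.2 ⟨_, hcol, hx⟩
      obtain ⟨p, hp1, hp2, rfl⟩ := fillAux_memIdx w u (i+1) _ inv1 inv2 x hxf
      rw [← htop']
      exact hanti i p (by omega) hp2
    | a' + 1, htop =>
      rw [List.getD_cons_succ] at htop hx
      rw [List.length_cons] at hb
      exact ih (i+1) _ inv1 inv2 a' b' (by omega) (by omega) top htop x hx

private lemma fillAux_chain (w : List ℕ)
    (hgap : ∀ a b : ℕ, a + 2 ≤ b → b < w.length → w.getD b 0 < w.getD a 0)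
    (u : List ℕ) :
    ∀ i c, i + u.length ≤ c → c + u.count 2 = w.length →
    ((u ≠ [] → u.getLast? ≠ some 2) ∨
      (u.count 2 ≤ 1 → i + u.length + 1 ≤ c) ∨
      (w.getD (w.length - 1) 0 < w.getD (w.length - 2) 0)) →
    ∀ col ∈ fillAux w u i c, List.Chain' (fun a b => b < a) col := by
  induction u with
  | nil => intro i c _ _ _ col hcol; simp [fillAux_nil] at hcol
  | cons q u ih =>
    intro i c h1 h2 hD col hcol
    rw [List.length_cons] at h1
    rw [fillAux_cons] at hcol
    rcases List.mem_cons.1 hcol with rfl | hcol'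
    · -- head column
      by_cases hq : q = 2
      · subst hq
        rw [List.count_cons_self] at h2
        rw [if_pos rfl]
        have hclen : c < w.length := by omega
        refine List.isChain_cons_cons.2 ⟨?_, List.isChain_singleton _⟩
        by_cases hbig : i + 2 ≤ c
        · exact hgap i c hbig hclen
        · -- borderline: c = i + 1, u = []
          have hc1 : c = i + 1 := by omega
          have hu0 : u = [] := List.length_eq_zero_iff.1 (by omega)
          subst hu0
          rcases hD with hD | hD | hD
          · exact absurd (by simp) (hD (by simp))
          · have := hD (by simp)
            rw [List.length_cons] at this
            omega
          · have hce : c = w.length - 1 := by simp at h2; omega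
            have hie : i = w.length - 2 := by simp at h2; omega
            rw [hce, hie]
            exact hD
      · rw [if_neg hq]; exact List.isChain_singleton _
    · -- tail columns
      have inv2 : (if q = 2 then c + 1 else c) + u.count 2 = w.length := by
        by_cases hq : q = 2
        · subst hq; rw [List.count_cons_self] at h2; rw [if_pos rfl]; omega
        · rw [List.count_cons_of_ne hq] at h2; rw [if_neg hq]; omega
      apply ih (i+1) _ (by split_ifs <;> omega) inv2 ?_ col hcol'
      rcases hD with hD | hD | hD
      · left
        intro hne hlast
        cases u with
        | nil => exact hne rfl
        | cons b l =>
          exact hD (by simp) (by rw [List.getLast?_cons_cons]; exact hlast)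
      · right; left
        intro hcnt
        by_cases hq : q = 2
        · subst hq; rw [List.count_cons_self] at h2; omega
        · have := hD (by rw [List.count_cons_of_ne hq]; omega)
          rw [List.length_cons] at this
          simp only [if_neg hq]
          omega
      · right; right; exact hD

private lemma seg_cons {w : List ℕ} {i : ℕ} (hi : i < w.length) (len : ℕ) :
    (w.drop i).take (len + 1) = w.getD i 0 :: (w.drop (i + 1)).take len := by
  rw [List.drop_eq_getElem_cons hi, List.take_succ_cons, List.getD_eq_getElem _ _ hi]

private lemma fillAux_perm (w : List ℕ) (u : List ℕ) :
    ∀ i c, i + u.length ≤ c → c + u.count 2 ≤ w.length →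
    (fillAux w u i c).flatten.Perm
      ((w.drop i).take u.length ++ (w.drop c).take (u.count 2)) := by
  induction u with
  | nil => intro i c _ _; simp [fillAux_nil]
  | cons q u ih =>
    intro i c h1 h2
    rw [List.length_cons] at h1
    have hi : i < w.length := by omega
    by_cases hq : q = 2
    · subst hq
      rw [List.count_cons_self] at h2
      have hclen : c < w.length := by omega
      have hIH := ih (i+1) (c+1) (by omega) (by omega)
      rw [fillAux_cons, if_pos rfl, if_pos rfl, List.flatten_cons, List.count_cons_self,
        List.length_cons, seg_cons hi, seg_cons hclen, List.cons_append]
      refine List.Perm.cons _ ?_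
      refine ((hIH).cons _).trans ?_
      exact List.perm_middle.symm
    · have hcnt : (q :: u).count 2 = u.count 2 := List.count_cons_of_ne hq
      rw [hcnt] at h2
      have hIH := ih (i+1) c (by omega) h2
      rw [fillAux_cons, if_neg hq, if_neg hq, List.flatten_cons, hcnt,
        List.length_cons, seg_cons hi, List.cons_append]
      exact hIH.cons _

private lemma construct {n : ℕ} (hn : 2 ≤ n) {u v : List ℕ}
    (hu : IsSnakeshape u) (husum : u.sum = n)
    (hv : IsSnakeshape v) (hvsum : v.sum = n)
    (hne : ¬(u = List.replicate (n - 2) 1 ++ [2] ∧ v.head? = some 2)) :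
    ∃ t, IsSSYFT u t ∧ ContentIs v t := by
  have hwlen : (cWord v).length = n := by rw [cWord_length, hvsum]
  have hanti : ∀ a b : ℕ, a ≤ b → b < (cWord v).length →
      (cWord v).getD b 0 ≤ (cWord v).getD a 0 :=
    fun a b h1 h2 => cWord_anti h1 h2
  have hgap : ∀ a b : ℕ, a + 2 ≤ b → b < (cWord v).length →
      (cWord v).getD b 0 < (cWord v).getD a 0 :=
    word_gap hanti (cWord_count_le hv)
  have hsum2 : u.sum = u.length + u.count 2 := snake_sum hu
  refine ⟨fillAux (cWord v) u 0 u.length, ⟨?_, ?_, ?_, ?_⟩, ?_⟩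
  · exact fillAux_shape (cWord v) u 0 u.length hu
  · -- columns strictly decreasing
    apply fillAux_chain (cWord v) hgap u 0 u.length (by omega) (by omega)
    by_cases hlast : u.getLast? = some 2
    · by_cases hm : u.count 2 ≤ 1
      · right; right
        -- u = replicate (n-2) 1 ++ [2]
        have hune : u ≠ [] := by intro h; rw [h] at hlast; simp at hlast
        have hgl : u.getLast hune = 2 := by
          have h' := List.getLast?_eq_getLast hune
          rw [h'] at hlast
          exact Option.some_inj.1 hlast
        have e1 : u.dropLast ++ [2] = u := by
          rw [← hgl]; exact List.dropLast_concat_getLast hune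
        have hcnt : u.count 2 = u.dropLast.count 2 + 1 := by
          conv_lhs => rw [← e1]
          rw [List.count_append]
          simp
        have hall1 : ∀ b ∈ u.dropLast, b = 1 := by
          intro b hb
          have hbu : b ∈ u := by rw [← e1]; exact List.mem_append_left _ hb
          rcases hu b hbu with rfl | rfl
          · rfl
          · exact absurd (List.count_pos_iff.2 hb) (by omega)
        have hrep : u.dropLast = List.replicate (u.length - 1) 1 :=
          List.eq_replicate_iff.2 ⟨by rw [List.length_dropLast], hall1⟩
        have hklen : u.length - 1 = n - 2 := by
          have hlu : u.length ≥ 1 := by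
            cases u with
            | nil => exact absurd rfl hune
            | cons a l => simp
          omega
        have hurep : u = List.replicate (n - 2) 1 ++ [2] := by
          rw [← e1, hrep, hklen]
        have hv2 : v.head? ≠ some 2 := fun h => hne ⟨hurep, h⟩
        have hvne : v ≠ [] := by
          intro h; rw [h] at hvsum; simp at hvsum; omega
        have hv0 : v.getD 0 0 = 1 := by
          cases v with
          | nil => exact absurd rfl hvne
          | cons v0 v' =>
            rcases hv v0 (by simp) with rfl | rfl
            · rfl
            · exact absurd rfl hv2
        have h1cnt : (cWord v).count 1 = 1 := by
          have h := cWord_count v 0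
          rw [hv0] at h
          simpa using h
        apply word_last2 hanti h1cnt (fun x hx => cWord_mem_pos hx)
        omega
      · right; left; intro h; omega
    · left; intro _; exact hlast
  · -- dominance
    exact fillAux_dom (cWord v) hanti u 0 u.length (by omega) (by omega)
  · -- positivity
    intro x hx
    obtain ⟨p, _, hp2, rfl⟩ := fillAux_memIdx (cWord v) u 0 u.length (by omega) (by omega) x hx
    exact cWord_mem_pos (cWord_getD_mem hp2)
  · -- content
    intro i
    have hperm : (fillAux (cWord v) u 0 u.length).flatten.Perm (cWord v) := by
      have hp := fillAux_perm (cWord v) u 0 u.length (by omega) (by omega)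
      have h1 : ((cWord v).drop 0).take u.length = (cWord v).take u.length := by
        rw [List.drop_zero]
      have h2 : ((cWord v).drop u.length).take (u.count 2) = (cWord v).drop u.length := by
        apply List.take_of_length_le
        rw [List.length_drop]
        omega
      rw [h1, h2, List.take_append_drop] at hp
      exact hp
    rw [hperm.count_eq, cWord_count]

private lemma exc_empty {n : ℕ} (hn : 2 ≤ n) {v : List ℕ} (hv1 : v.getD 0 0 = 2)
    (t : List (List ℕ)) (ht : IsSSYFT (List.replicate (n - 2) 1 ++ [2]) t)
    (hc : ContentIs v t) : False := by
  obtain ⟨hshape, hchain, hdom, hpos⟩ := ht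
  have hulen : (List.replicate (n - 2) 1 ++ [2] : List ℕ).length = n - 1 := by
    simp; omega
  have hlen : t.length = n - 1 := by
    have := congrArg List.length hshape
    simp only [shapeOf, List.length_map] at this
    omega
  have hL : n - 2 < t.length := by omega
  -- last column has two entries with larger top
  have hlast_len : (t.getD (n-2) []).length = 2 := by
    have e1 : (t.map List.length).getD (n-2) 0 = (List.replicate (n - 2) 1 ++ [2] : List ℕ).getD (n-2) 0 := by
      rw [show t.map List.length = _ from hshape]
    have e2 : (List.replicate (n - 2) 1 ++ [2] : List ℕ).getD (n-2) 0 = 2 := by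
      rw [List.getD_append_right _ _ _ _ (by simp)]
      simp
    rw [List.getD_eq_getElem _ _ (by simpa using hL), List.getElem_map] at e1
    rw [List.getD_eq_getElem _ _ hL]
    omega
  obtain ⟨a0, b0, hab⟩ := List.length_eq_two.1 hlast_len
  have hcol_mem : t.getD (n-2) [] ∈ t := by
    rw [List.getD_eq_getElem _ _ hL]; exact List.getElem_mem _
  have hba : b0 < a0 := by
    have := hchain _ hcol_mem
    rw [hab] at this
    exact (List.isChain_cons_cons.1 this).1
  have hbpos : 1 ≤ b0 := by
    apply hpos
    exact List.mem_flatten.2 ⟨_, hcol_mem, by rw [hab]; simp⟩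
  have ha2 : 2 ≤ a0 := by omega
  -- there are two 1's
  have hcount : t.flatten.count 1 = 2 := by
    have h0 := hc 0
    rw [hv1] at h0
    simpa using h0
  -- split off the last column
  have htne : t ≠ [] := by intro h; rw [h] at hlen; simp at hlen; omega
  have hglast : t.getLast htne = t.getD (n-2) [] := by
    rw [List.getLast_eq_getElem, List.getD_eq_getElem _ _ hL]
    congr 1
    omega
  have hsplit : t.dropLast ++ [t.getD (n-2) []] = t := by
    rw [← hglast]; exact List.dropLast_concat_getLast htne
  have hcount_last : (t.getD (n-2) []).count 1 ≤ 1 := by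
    rw [hab]
    have ha1 : ¬((a0 == 1) = true) := by simp; omega
    simp only [List.count_cons, List.count_nil, ha1]
    split <;> simp
  have hcount_dl : 1 ≤ t.dropLast.flatten.count 1 := by
    have hh : t.flatten.count 1 = t.dropLast.flatten.count 1 + (t.getD (n-2) []).count 1 := by
      conv_lhs => rw [← hsplit]
      rw [List.flatten_append, List.count_append]
      simp
    omega
  have h1mem : (1 : ℕ) ∈ t.dropLast.flatten := List.count_pos_iff.1 (by omega)
  obtain ⟨col, hcolmem, h1col⟩ := List.mem_flatten.1 h1mem
  obtain ⟨j, hj, hje⟩ := List.getElem_of_mem hcolmem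
  have hjlen : j < n - 2 := by
    have : t.dropLast.length = t.length - 1 := List.length_dropLast
    omega
  have hjt : t.dropLast[j] = t[j]'(by omega) := List.getElem_dropLast hj
  -- column j is a single cell
  have hcollen : col.length = 1 := by
    have e1 : (t.map List.length).getD j 0 = (List.replicate (n - 2) 1 ++ [2] : List ℕ).getD j 0 := by
      rw [show t.map List.length = _ from hshape]
    have e2 : (List.replicate (n - 2) 1 ++ [2] : List ℕ).getD j 0 = 1 := by
      rw [List.getD_append _ _ _ _ (by simp; omega)]
      rw [List.getD_eq_getElem _ _ (by simp; omega)]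
      simp
    rw [List.getD_eq_getElem _ _ (by simp; omega), List.getElem_map] at e1
    have e3 : t[j]'(by omega) = col := by rw [← hjt, hje]
    rw [e3] at e1
    omega
  obtain ⟨z, hz⟩ := List.length_eq_one_iff.1 hcollen
  have hz1 : z = 1 := by
    rw [hz] at h1col
    exact (List.mem_singleton.1 h1col).symm
  -- dominance contradiction
  have hdomj := hdom j (n-2) hjlen hL 1 ?_ a0 ?_
  · omega
  · rw [List.getD_eq_getElem _ _ (show j < t.length by omega), ← hjt, hje, hz, hz1]
    simp
  · rw [hab]; simp

private lemma shape_flatten_inj : ∀ (t1 t2 : List (List ℕ)),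
    t1.map List.length = t2.map List.length → t1.flatten = t2.flatten → t1 = t2 := by
  intro t1
  induction t1 with
  | nil =>
    intro t2 h _
    cases t2 with
    | nil => rfl
    | cons c t => simp at h
  | cons c t ih =>
    intro t2 h hf
    cases t2 with
    | nil => simp at h
    | cons c2 t2' =>
      simp only [List.map_cons, List.cons.injEq] at h
      rw [List.flatten_cons, List.flatten_cons] at hf
      obtain ⟨h1, h2⟩ := List.append_inj hf h.1
      rw [h1, ih t2' h.2 h2]

private lemma tab_flatten_length {u : List ℕ} {t : List (List ℕ)} (ht : IsSSYFT u t) :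
    t.flatten.length = u.sum := by
  rw [List.length_flatten, show t.map List.length = u from ht.1]

private lemma tab_entry_le {u v : List ℕ} {t : List (List ℕ)}
    (ht : IsSSYFT u t) (hc : ContentIs v t) :
    ∀ x ∈ t.flatten, x ≤ v.length := by
  intro x hx
  have hx1 : 1 ≤ x := ht.2.2.2 x hx
  have hcount : 0 < t.flatten.count x := List.count_pos_iff.2 hx
  have hcc := hc (x - 1)
  rw [show x - 1 + 1 = x by omega] at hcc
  by_contra hgt
  push_neg at hgt
  rw [List.getD_eq_default _ _ (by omega)] at hcc
  omega

private lemma tab_finite (u v : List ℕ) :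
    Finite {t : List (List ℕ) // IsSSYFT u t ∧ ContentIs v t} := by
  apply Finite.of_injective
    (f := fun t : {t : List (List ℕ) // IsSSYFT u t ∧ ContentIs v t} =>
      fun i : Fin u.sum =>
        (⟨min (t.1.flatten.getD i 0) v.length,
          Nat.lt_succ_of_le (min_le_right _ _)⟩ : Fin (v.length + 1)))
  intro t1 t2 h
  apply Subtype.ext
  have hs1 : t1.1.map List.length = u := t1.2.1.1
  have hs2 : t2.1.map List.length = u := t2.2.1.1
  apply shape_flatten_inj _ _ (by rw [hs1, hs2])
  apply List.ext_getElem
  · rw [tab_flatten_length t1.2.1, tab_flatten_length t2.2.1]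
  · intro i h1 h2
    have hi : i < u.sum := by rw [← tab_flatten_length t1.2.1]; exact h1
    have hfi := congrFun h ⟨i, hi⟩
    simp only [Fin.mk.injEq] at hfi
    have b1 : t1.1.flatten[i] ≤ v.length :=
      tab_entry_le t1.2.1 t1.2.2 _ (List.getElem_mem _)
    have b2 : t2.1.flatten[i] ≤ v.length :=
      tab_entry_le t2.2.1 t2.2.2 _ (List.getElem_mem _)
    rw [List.getD_eq_getElem _ _ h1, List.getD_eq_getElem _ _ h2,
      min_eq_left b1, min_eq_left b2] at hfi
    exact hfi

end YFAux


/-- for snakeshapes `u, v` of size `n ≥ 2`, `N_{u,v} = 0` iff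
`u = (1,…,1,2)` (with `n-2` parts `1`) and the first part of `v` is `2`. -/
theorem YFNumber_eq_zero_iff (n : ℕ) (hn : 2 ≤ n) (u v : List ℕ)
    (hu : IsSnakeshape u) (husum : u.sum = n)
    (hv : IsSnakeshape v) (hvsum : v.sum = n) :
    YFNumber u v = 0 ↔
      u = List.replicate (n - 2) 1 ++ [2] ∧ v.head? = some 2 := by
  have hfin := tab_finite u v
  unfold YFNumber
  constructor
  · intro h0
    by_contra hne
    obtain ⟨t, ht⟩ := construct hn hu husum hv hvsum hne
    haveI := hfin
    haveI : Nonempty {t : List (List ℕ) // IsSSYFT u t ∧ ContentIs v t} := ⟨⟨t, ht.1, ht.2⟩⟩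
    have := Nat.card_pos (α := {t : List (List ℕ) // IsSSYFT u t ∧ ContentIs v t})
    omega
  · rintro ⟨h1, h2⟩
    have hv1 : v.getD 0 0 = 2 := by cases v <;> simp_all
    haveI : IsEmpty {t : List (List ℕ) // IsSSYFT u t ∧ ContentIs v t} :=
      ⟨fun ⟨t, ht1, ht2⟩ => exc_empty hn hv1 t (h1 ▸ ht1) ht2⟩
    exact Nat.card_of_isEmpty
end

section
/- If a standard Young-Fibonacci tableau t₂ of size n is obtained from a standard Young-Fibonacci tableau t₁ of size n by shifting one entry, then inv(min(t₂)) = inv(min(t₁)) + 1, where min(t) is the permutation obtained by reading the columns of t from right to left, each column from top to bottom, and inv(σ) is the number of pairs (j,i) with i < j such that j occurs before i in the word σ(1)⋯σ(n). -/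
def inv' : List ℕ → ℕ
  | [] => 0
  | x :: w => w.countP (fun y => decide (y < x)) + inv' w

lemma card_filter_getD (w : List ℕ) (x : ℕ) :
    ((Finset.range w.length).filter (fun i => w.getD i 0 < x)).card
      = w.countP (fun y => decide (y < x)) := by
  induction w using List.reverseRecOn with
  | nil => simp
  | append_singleton v y ih =>
    rw [List.countP_append, List.length_append, List.length_singleton,
      Finset.range_add_one, Finset.filter_insert]
    have hg : ∀ i ∈ Finset.range v.length, (v ++ [y]).getD i 0 = v.getD i 0 := by
      intro i hi
      exact List.getD_append _ _ _ _ (Finset.mem_range.mp hi)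
    rw [Finset.filter_congr (fun i hi => by rw [hg i hi])]
    have hy : (v ++ [y]).getD v.length 0 = y := by
      simp [List.getD_eq_getElem?_getD, List.getElem?_append_right]
    rw [hy]
    by_cases h : y < x
    · rw [if_pos h, Finset.card_insert_of_notMem (by simp), ih]
      simp [h]
    · rw [if_neg h, ih]; simp [h]

lemma invCount_cons (x : ℕ) (w : List ℕ) :
    invCount (x :: w) = w.countP (fun y => decide (y < x)) + invCount w := by
  classical
  have hlen : (x :: w).length = w.length + 1 := rfl
  set P : ℕ × ℕ → Prop := fun p => p.1 < p.2 ∧ (x :: w).getD p.2 0 < (x :: w).getD p.1 0 with hP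
  set S := (Finset.range (w.length+1) ×ˢ Finset.range (w.length+1)).filter P with hS
  have hmemS : ∀ p : ℕ × ℕ, p ∈ S ↔
      p.1 < w.length + 1 ∧ p.2 < w.length + 1 ∧ p.1 < p.2 ∧
        (x :: w).getD p.2 0 < (x :: w).getD p.1 0 := by
    intro p
    simp only [hS, hP, Finset.mem_filter, Finset.mem_product, Finset.mem_range]
    tauto
  have hsplit := Finset.card_filter_add_card_filter_not (s := S) (p := fun p => p.1 = 0)
  have h0 : (S.filter (fun p => p.1 = 0)).card = w.countP (fun y => decide (y < x)) := by
    rw [← card_filter_getD w x]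
    refine Finset.card_bij' (fun p _ => p.2 - 1) (fun i _ => ((0 : ℕ), i + 1))
      ?hi ?hj ?li ?ri
    case hi =>
      intro p hp
      rw [Finset.mem_filter] at hp
      obtain ⟨hp, h5⟩ := hp
      rw [hmemS] at hp
      obtain ⟨h1, h2, h3, h4⟩ := hp
      rw [h5] at h3 h4
      simp only [Finset.mem_filter, Finset.mem_range]
      refine ⟨by omega, ?_⟩
      have he : p.2 = (p.2 - 1) + 1 := by omega
      rw [he] at h4
      simpa using h4
    case hj =>
      intro i hi
      simp only [Finset.mem_filter, Finset.mem_range] at hi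
      rw [Finset.mem_filter, hmemS]
      dsimp only
      refine ⟨⟨by omega, by omega, by omega, ?_⟩, rfl⟩
      simpa using hi.2
    case li =>
      intro p hp
      rw [Finset.mem_filter, hmemS] at hp
      have h3 : 0 < p.2 := by
        have := hp.1.2.2.1; omega
      have h5 := hp.2
      show ((0:ℕ), p.2 - 1 + 1) = p
      have hpp : p = (p.1, p.2) := rfl
      rw [hpp, h5]
      congr 1
      omega
    case ri =>
      intro i hi
      simp
  have h1 : (S.filter (fun p => ¬ p.1 = 0)).card
      = ((Finset.range w.length ×ˢ Finset.range w.length).filter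
          (fun p => p.1 < p.2 ∧ w.getD p.2 0 < w.getD p.1 0)).card := by
    refine Finset.card_bij' (fun p _ => (p.1 - 1, p.2 - 1)) (fun p _ => (p.1 + 1, p.2 + 1))
      ?hi ?hj ?li ?ri
    case hi =>
      intro p hp
      rw [Finset.mem_filter, hmemS] at hp
      obtain ⟨⟨ha, hb, hc, hd⟩, he⟩ := hp
      simp only [Finset.mem_filter, Finset.mem_product, Finset.mem_range]
      have hp1 : p.1 = (p.1 - 1) + 1 := by omega
      have hp2 : p.2 = (p.2 - 1) + 1 := by omega
      rw [hp1, hp2] at hd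
      simp only [List.getD_cons_succ] at hd
      exact ⟨⟨by omega, by omega⟩, by omega, hd⟩
    case hj =>
      intro p hp
      simp only [Finset.mem_filter, Finset.mem_product, Finset.mem_range] at hp
      obtain ⟨⟨ha, hb⟩, hc, hd⟩ := hp
      rw [Finset.mem_filter, hmemS]
      dsimp only
      refine ⟨⟨by omega, by omega, by omega, ?_⟩, by omega⟩
      simpa only [List.getD_cons_succ] using hd
    case li =>
      intro p hp
      rw [Finset.mem_filter, hmemS] at hp
      have hq1 : 0 < p.1 := Nat.pos_of_ne_zero hp.2
      have hq2 : 0 < p.2 := by have := hp.1.2.2.1; omega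
      show (p.1 - 1 + 1, p.2 - 1 + 1) = p
      have hpp : p = (p.1, p.2) := rfl
      rw [hpp]
      congr 1 <;> omega
    case ri =>
      intro p hp
      simp
  have hfin : invCount (x :: w) = S.card := by
    unfold invCount
    rw [hlen]
  rw [hfin]
  unfold invCount
  omega

lemma invCount_eq_inv' (w : List ℕ) : invCount w = inv' w := by
  induction w with
  | nil => simp [invCount, inv']
  | cons x w ih => rw [invCount_cons, ih]; rfl

lemma inv'_append (a b : List ℕ) :
    inv' (a ++ b) = inv' a + inv' b +
      (a.map (fun x => b.countP (fun y => decide (y < x)))).sum := by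
  induction a with
  | nil => simp [inv']
  | cons x a ih =>
    simp only [List.cons_append, inv', List.append_eq, ih, List.countP_append, List.map_cons, List.sum_cons]
    omega

lemma key (R L M1 M2 : List ℕ) (hperm : M1.Perm M2) (h : inv' M2 = inv' M1 + 1) :
    invCount (R ++ M2 ++ L) = invCount (R ++ M1 ++ L) + 1 := by
  have hcnt : ∀ x : ℕ, M1.countP (fun y => decide (y < x)) = M2.countP (fun y => decide (y < x)) :=
    fun x => hperm.countP_eq _
  have hsum : (M1.map (fun x => L.countP (fun y => decide (y < x)))).sum
      = (M2.map (fun x => L.countP (fun y => decide (y < x)))).sum :=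
    (hperm.map _).sum_eq
  rw [invCount_eq_inv', invCount_eq_inv',
    inv'_append, inv'_append, inv'_append, inv'_append,
    List.map_append, List.map_append, List.sum_append, List.sum_append]
  simp only [hcnt] at *
  omega

lemma minWord_split (l m r : List (List ℕ)) :
    minWord (l ++ m ++ r) = minWord r ++ minWord m ++ minWord l := by
  simp [minWord, List.reverse_append, List.flatten_append]

lemma yft_mid (n : ℕ) (l r m : List (List ℕ)) (h : IsYFT n (l ++ m ++ r)) :
    (∀ c ∈ m, List.Chain' (fun a b => b < a) c) ∧
    (∀ i j : ℕ, i < j → j < m.length →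
      ∀ a ∈ (m.getD i []).head?, ∀ x ∈ m.getD j [], x < a) := by
  obtain ⟨_, hch, h3, _⟩ := h
  constructor
  · intro c hc; exact hch c (by simp [hc])
  · intro i j hij hj a ha x hx
    have hgi : (l ++ m ++ r).getD (l.length + i) [] = m.getD i [] := by
      rw [List.append_assoc, List.getD_append_right _ _ _ _ (by omega)]
      rw [Nat.add_sub_cancel_left]
      exact List.getD_append _ _ _ _ (by omega)
    have hgj : (l ++ m ++ r).getD (l.length + j) [] = m.getD j [] := by
      rw [List.append_assoc, List.getD_append_right _ _ _ _ (by omega)]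
      rw [Nat.add_sub_cancel_left]
      exact List.getD_append _ _ _ _ (by omega)
    have hlen : l.length + j < (l ++ m ++ r).length := by
      simp only [List.length_append]; omega
    exact h3 (l.length + i) (l.length + j) (by omega) hlen a (by rw [hgi]; exact ha) x
      (by rw [hgj]; exact hx)

lemma perm3 (a d c : ℕ) : List.Perm [a, d, c] [c, d, a] :=
  ((List.Perm.swap d a [c]).trans ((List.Perm.swap c a []).cons d)).trans
    (List.Perm.swap c d [a])


/-- shifting one entry increases by exactly one the number of
inversions of the minimal canonical word. -/
theorem shift_increases_inversions_by_one (n : ℕ) (t₁ t₂ : List (List ℕ))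
    (h₁ : IsYFT n t₁) (h₂ : IsYFT n t₂) (h : Shift t₁ t₂) :
    invCount (minWord t₂) = invCount (minWord t₁) + 1 := by
  induction h with
  | bump2 l r c b a =>
    obtain ⟨hch, h3⟩ := yft_mid n l r [[c], [b, a]] h₁
    have hab : a < b := by
      have := hch [b, a] (by simp); exact (List.isChain_pair (R := fun a b => b < a)).mp this
    have hbc : b < c := h3 0 1 (by omega) (by simp) c (by simp) b (by simp)
    have hac : a < c := h3 0 1 (by omega) (by simp) c (by simp) a (by simp)
    rw [minWord_split, minWord_split]
    have e1 : minWord [[c], [b, a]] = [b, a, c] := by simp [minWord]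
    have e2 : minWord [[c, a], [b]] = [b, c, a] := by simp [minWord]
    rw [e1, e2]
    refine key _ _ _ _ ((List.Perm.swap c a []).cons b) ?_
    simp only [inv', List.countP_cons, List.countP_nil, decide_eq_true_eq]
    split_ifs <;> omega
  | bump1 l r c a =>
    obtain ⟨hch, h3⟩ := yft_mid n l r [[c], [a]] h₁
    have hac : a < c := h3 0 1 (by omega) (by simp) c (by simp) a (by simp)
    rw [minWord_split, minWord_split]
    have e1 : minWord [[c], [a]] = [a, c] := by simp [minWord]
    have e2 : minWord [[c, a]] = [c, a] := by simp [minWord]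
    rw [e1, e2]
    refine key _ _ _ _ (List.Perm.swap c a []) ?_
    simp only [inv', List.countP_cons, List.countP_nil, decide_eq_true_eq]
    split_ifs <;> omega
  | exch l r d c b a hac hcb =>
    obtain ⟨hch, h3⟩ := yft_mid n l r [[d, c], [b, a]] h₁
    have hab : a < b := by
      have := hch [b, a] (by simp); exact (List.isChain_pair (R := fun a b => b < a)).mp this
    have hcd : c < d := by
      have := hch [d, c] (by simp); exact (List.isChain_pair (R := fun a b => b < a)).mp this
    have hbd : b < d := h3 0 1 (by omega) (by simp) d (by simp) b (by simp)
    have had : a < d := h3 0 1 (by omega) (by simp) d (by simp) a (by simp)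
    rw [minWord_split, minWord_split]
    have e1 : minWord [[d, c], [b, a]] = [b, a, d, c] := by simp [minWord]
    have e2 : minWord [[d, a], [b, c]] = [b, c, d, a] := by simp [minWord]
    rw [e1, e2]
    refine key _ _ _ _ ((perm3 a d c).cons b) ?_
    simp only [inv', List.countP_cons, List.countP_nil, decide_eq_true_eq]
    split_ifs <;> omega
  | split2 l r d c b a hac hbc =>
    obtain ⟨hch, h3⟩ := yft_mid n l r [[d, c], [b, a]] h₁
    have hab : a < b := by
      have := hch [b, a] (by simp); exact (List.isChain_pair (R := fun a b => b < a)).mp this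
    have hcd : c < d := by
      have := hch [d, c] (by simp); exact (List.isChain_pair (R := fun a b => b < a)).mp this
    have hbd : b < d := h3 0 1 (by omega) (by simp) d (by simp) b (by simp)
    have had : a < d := h3 0 1 (by omega) (by simp) d (by simp) a (by simp)
    rw [minWord_split, minWord_split]
    have e1 : minWord [[d, c], [b, a]] = [b, a, d, c] := by simp [minWord]
    have e2 : minWord [[d, a], [c], [b]] = [b, c, d, a] := by simp [minWord]
    rw [e1, e2]
    refine key _ _ _ _ ((perm3 a d c).cons b) ?_
    simp only [inv', List.countP_cons, List.countP_nil, decide_eq_true_eq]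
    split_ifs <;> omega
  | split1 l r d c a hac =>
    obtain ⟨hch, h3⟩ := yft_mid n l r [[d, c], [a]] h₁
    have hcd : c < d := by
      have := hch [d, c] (by simp); exact (List.isChain_pair (R := fun a b => b < a)).mp this
    have had : a < d := h3 0 1 (by omega) (by simp) d (by simp) a (by simp)
    rw [minWord_split, minWord_split]
    have e1 : minWord [[d, c], [a]] = [a, d, c] := by simp [minWord]
    have e2 : minWord [[d, a], [c]] = [c, d, a] := by simp [minWord]
    rw [e1, e2]
    refine key _ _ _ _ (perm3 a d c) ?_
    simp only [inv', List.countP_cons, List.countP_nil, decide_eq_true_eq]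
    split_ifs <;> omega
end

section
/- The relation ⪯ on the set YFT_n of standard Young-Fibonacci tableaux of size n, defined as the reflexive–transitive closure of 't ⪯ t′ whenever t′ is obtained from t by shifting one entry', is a partial order, and (YFT_n, ⪯) is a graded poset whose rank function is t ↦ inv(min(t)): its covering relation is exactly 't′ is obtained from t by shifting one entry', and whenever t′ covers t one has inv(min(t′)) = inv(min(t)) + 1. -/
/-- The weak order on standard Young–Fibonacci tableaux of size `n`: the
reflexive–transitive closure of the relation of shifting one entry. -/
def YFTle (n : ℕ) (t t' : {t : List (List ℕ) // IsYFT n t}) : Prop :=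
  Relation.ReflTransGen
    (fun a b : {t : List (List ℕ) // IsYFT n t} => Shift a.1 b.1) t t'

private lemma my_countP_eq_sum (p : ℕ → Bool) (w : List ℕ) :
    w.countP p = ∑ i ∈ Finset.range w.length, if p (w.getD i 0) then 1 else 0 := by
  induction w with
  | nil => simp
  | cons a w ih =>
    rw [List.countP_cons, List.length_cons, Finset.sum_range_succ']
    simp [ih]

private lemma my_invCount_eq_sum (w : List ℕ) :
    invCount w = ∑ p ∈ Finset.range w.length, ∑ q ∈ Finset.range w.length,
      if p < q ∧ w.getD q 0 < w.getD p 0 then 1 else 0 := by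
  rw [invCount, Finset.card_filter, Finset.sum_product]

private lemma my_invCount_cons (a : ℕ) (w : List ℕ) :
    invCount (a :: w) = w.countP (fun z => decide (z < a)) + invCount w := by
  rw [my_invCount_eq_sum (a :: w), my_invCount_eq_sum w, my_countP_eq_sum,
    List.length_cons, Finset.sum_range_succ', add_comm]
  congr 1
  · rw [Finset.sum_range_succ']
    simp
  · apply Finset.sum_congr rfl
    intro p _
    rw [Finset.sum_range_succ']
    simp

private lemma my_swap (A B : List ℕ) (x y : ℕ) (h : x < y) :
    invCount (A ++ y :: x :: B) = invCount (A ++ x :: y :: B) + 1 := by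
  induction A with
  | nil =>
    simp only [List.nil_append, my_invCount_cons, List.countP_cons]
    simp [h, Nat.lt_asymm h]
    omega
  | cons a A ih =>
    simp only [List.cons_append, my_invCount_cons]
    have : (A ++ y :: x :: B).countP (fun z => decide (z < a)) =
        (A ++ x :: y :: B).countP (fun z => decide (z < a)) := by
      simp only [List.countP_append, List.countP_cons]
      omega
    omega

private lemma my_swap2 (A B : List ℕ) (b a d c : ℕ) (h1 : a < c) (h2 : c < d) :
    invCount (A ++ b :: c :: d :: a :: B) = invCount (A ++ b :: a :: d :: c :: B) + 1 := by
  have s1 := my_swap (A ++ [b, a]) B c d h2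
  have s2 := my_swap (A ++ [b]) (d :: B) a c h1
  have s3 := my_swap (A ++ [b, c]) B a d (h1.trans h2)
  simp only [List.append_assoc, List.cons_append, List.nil_append] at s1 s2 s3 ⊢
  omega

private lemma my_swap1 (A B : List ℕ) (a d c : ℕ) (h1 : a < c) (h2 : c < d) :
    invCount (A ++ c :: d :: a :: B) = invCount (A ++ a :: d :: c :: B) + 1 := by
  have s1 := my_swap (A ++ [a]) B c d h2
  have s2 := my_swap A (d :: B) a c h1
  have s3 := my_swap (A ++ [c]) B a d (h1.trans h2)
  simp only [List.append_assoc, List.cons_append, List.nil_append] at s1 s2 s3 ⊢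
  omega


private lemma shift_inv {n : ℕ} {t t' : List (List ℕ)} (ht : IsYFT n t) (ht' : IsYFT n t')
    (h : Shift t t') : invCount (minWord t') = invCount (minWord t) + 1 := by
  cases h with
  | bump2 l r c b a =>
    have hac : a < c := by
      have := ht'.2.1 [c, a] (by simp)
      simpa [List.Chain'] using this
    have e1 : minWord (l ++ [[c], [b, a]] ++ r) =
        (r.reverse.flatten ++ [b]) ++ a :: c :: l.reverse.flatten := by
      simp [minWord]
    have e2 : minWord (l ++ [[c, a], [b]] ++ r) =
        (r.reverse.flatten ++ [b]) ++ c :: a :: l.reverse.flatten := by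
      simp [minWord]
    rw [e1, e2, my_swap _ _ _ _ hac]
  | bump1 l r c a =>
    have hac : a < c := by
      have := ht'.2.1 [c, a] (by simp)
      simpa [List.Chain'] using this
    have e1 : minWord (l ++ [[c], [a]] ++ r) =
        r.reverse.flatten ++ a :: c :: l.reverse.flatten := by
      simp [minWord]
    have e2 : minWord (l ++ [[c, a]] ++ r) =
        r.reverse.flatten ++ c :: a :: l.reverse.flatten := by
      simp [minWord]
    rw [e1, e2, my_swap _ _ _ _ hac]
  | exch l r d c b a h1 h2 =>
    have hcd : c < d := by
      have := ht.2.1 [d, c] (by simp)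
      simpa [List.Chain'] using this
    have e1 : minWord (l ++ [[d, c], [b, a]] ++ r) =
        r.reverse.flatten ++ b :: a :: d :: c :: l.reverse.flatten := by
      simp [minWord]
    have e2 : minWord (l ++ [[d, a], [b, c]] ++ r) =
        r.reverse.flatten ++ b :: c :: d :: a :: l.reverse.flatten := by
      simp [minWord]
    rw [e1, e2, my_swap2 _ _ _ _ _ _ h1 hcd]
  | split2 l r d c b a h1 h2 =>
    have hcd : c < d := by
      have := ht.2.1 [d, c] (by simp)
      simpa [List.Chain'] using this
    have e1 : minWord (l ++ [[d, c], [b, a]] ++ r) =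
        r.reverse.flatten ++ b :: a :: d :: c :: l.reverse.flatten := by
      simp [minWord]
    have e2 : minWord (l ++ [[d, a], [c], [b]] ++ r) =
        r.reverse.flatten ++ b :: c :: d :: a :: l.reverse.flatten := by
      simp [minWord]
    rw [e1, e2, my_swap2 _ _ _ _ _ _ h1 hcd]
  | split1 l r d c a h1 =>
    have hcd : c < d := by
      have := ht.2.1 [d, c] (by simp)
      simpa [List.Chain'] using this
    have e1 : minWord (l ++ [[d, c], [a]] ++ r) =
        r.reverse.flatten ++ a :: d :: c :: l.reverse.flatten := by
      simp [minWord]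
    have e2 : minWord (l ++ [[d, a], [c]] ++ r) =
        r.reverse.flatten ++ c :: d :: a :: l.reverse.flatten := by
      simp [minWord]
    rw [e1, e2, my_swap1 _ _ _ _ _ h1 hcd]


private lemma yftle_inv_le {n : ℕ} {t t' : {t : List (List ℕ) // IsYFT n t}}
    (h : YFTle n t t') : invCount (minWord t.1) ≤ invCount (minWord t'.1) := by
  induction h with
  | refl => exact le_refl _
  | @tail b c h1 h2 ih =>
    have := shift_inv b.2 c.2 h2
    omega

private lemma yftle_inv_lt {n : ℕ} {t t' : {t : List (List ℕ) // IsYFT n t}}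
    (h : YFTle n t t') (hne : t ≠ t') :
    invCount (minWord t.1) < invCount (minWord t'.1) := by
  rcases h.cases_head with he | ⟨s, hs1, hs2⟩
  · exact absurd he hne
  · have h1 := shift_inv t.2 s.2 hs1
    have h2 := yftle_inv_le hs2
    omega

/-- `⪯` is a partial order on `YFT_n`, its covering relation is
exactly the one-entry shift, and a shift raises `t ↦ inv(min(t))` by exactly one,
so the poset is graded with this rank function. -/
theorem weak_order_on_YFT_graded_poset (n : ℕ) :
    IsPartialOrder {t : List (List ℕ) // IsYFT n t} (YFTle n) ∧
    (∀ t t' : {t : List (List ℕ) // IsYFT n t},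
      (YFTle n t t' ∧ t ≠ t' ∧
        ∀ s, YFTle n t s → YFTle n s t' → s = t ∨ s = t') ↔ Shift t.1 t'.1) ∧
    (∀ t t' : {t : List (List ℕ) // IsYFT n t}, Shift t.1 t'.1 →
      invCount (minWord t'.1) = invCount (minWord t.1) + 1) := by
  refine ⟨?_, ?_, fun t t' h => shift_inv t.2 t'.2 h⟩
  · exact
      { refl := fun a => Relation.ReflTransGen.refl
        trans := fun a b c hab hbc => hab.trans hbc
        antisymm := fun a b hab hba => by
          by_contra hne
          have h1 := yftle_inv_lt hab hne
          have h2 := yftle_inv_lt hba (Ne.symm hne)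
          omega }
  · intro t t'
    constructor
    · rintro ⟨hle, hne, hmid⟩
      rcases hle.cases_head with he | ⟨s, hs1, hs2⟩
      · exact absurd he hne
      · rcases hmid s (Relation.ReflTransGen.single hs1) hs2 with hst | hst'
        · rw [hst] at hs1
          have := shift_inv t.2 t.2 hs1
          omega
        · rw [hst'] at hs1
          exact hs1
    · intro hsh
      have hinc := shift_inv t.2 t'.2 hsh
      refine ⟨Relation.ReflTransGen.single hsh, ?_, ?_⟩
      · intro he
        rw [he] at hinc
        omega
      · intro s h1 h2
        by_cases hst : s = t
        · exact Or.inl hst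
        · refine Or.inr ?_
          by_contra hst'
          have l1 := yftle_inv_lt h1 (Ne.symm hst)
          have l2 := yftle_inv_lt h2 hst'
          omega
end

section
/- Let t be a standard Young-Fibonacci tableau of size n. Then the Young-Fibonacci class of t is exactly the interval [min(t), max(t)] of the weak order on S_n; that is, for every permutation σ of {1,…,n}, P(σ) = t if and only if min(t) ≤ σ ≤ max(t) in the weak order. -/
namespace YFProof

/-- `p` occurs strictly before `q` in the list `u`. -/
def Bef {α : Type*} (u : List α) (p q : α) : Prop := [p, q].Sublist u

theorem bef_iff_split {α : Type*} {u : List α} {p q : α} :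
    Bef u p q ↔ ∃ s r, u = s ++ r ∧ p ∈ s ∧ q ∈ r := by
  constructor
  · intro h
    rcases List.cons_sublist_iff.1 h with ⟨s, r, rfl, hp, hq⟩
    exact ⟨s, r, rfl, hp, List.singleton_sublist.1 hq⟩
  · rintro ⟨s, r, rfl, hp, hq⟩
    exact List.Sublist.append (List.singleton_sublist.2 hp) (List.singleton_sublist.2 hq)

theorem Bef.mono {α : Type*} {u v : List α} {p q : α} (h : Bef u p q) (huv : u.Sublist v) :
    Bef v p q := h.trans huv

theorem Bef.mem_left {α : Type*} {u : List α} {p q : α} (h : Bef u p q) : p ∈ u :=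
  h.subset (by simp)

theorem Bef.mem_right {α : Type*} {u : List α} {p q : α} (h : Bef u p q) : q ∈ u :=
  h.subset (by simp)

theorem bef_append {α : Type*} {s r : List α} {p q : α} (hp : p ∈ s) (hq : q ∈ r) :
    Bef (s ++ r) p q := bef_iff_split.2 ⟨s, r, rfl, hp, hq⟩

theorem bef_append_iff {α : Type*} {u₁ u₂ : List α} {p q : α} :
    Bef (u₁ ++ u₂) p q ↔ Bef u₁ p q ∨ Bef u₂ p q ∨ (p ∈ u₁ ∧ q ∈ u₂) := by
  constructor
  · intro h
    rcases bef_iff_split.1 h with ⟨s, r, hsr, hp, hq⟩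
    rcases List.append_eq_append_iff.1 hsr.symm with ⟨k, hk1, hk2⟩ | ⟨k, hk1, hk2⟩
    · subst hk1; subst hk2
      rcases List.mem_append.1 hq with hqk | hq2
      · exact Or.inl (bef_iff_split.2 ⟨s, k, rfl, hp, hqk⟩)
      · exact Or.inr (Or.inr ⟨List.mem_append_left _ hp, hq2⟩)
    · subst hk1; subst hk2
      rcases List.mem_append.1 hp with hp1 | hpk
      · exact Or.inr (Or.inr ⟨hp1, List.mem_append_right _ hq⟩)
      · exact Or.inr (Or.inl (bef_iff_split.2 ⟨k, r, rfl, hpk, hq⟩))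
  · rintro (h | h | ⟨hp, hq⟩)
    · exact h.mono (List.sublist_append_left _ _)
    · exact h.mono (List.sublist_append_right _ _)
    · exact bef_append hp hq

theorem bef_nil {α : Type*} {p q : α} : ¬ Bef [] p q := by
  intro h; simpa using h.length_le

theorem bef_singleton {α : Type*} {a p q : α} : ¬ Bef [a] p q := by
  intro h; simpa using h.length_le

theorem bef_cons_iff {α : Type*} {a : α} {u : List α} {p q : α} :
    Bef (a :: u) p q ↔ (p = a ∧ q ∈ u) ∨ Bef u p q := by
  have : a :: u = [a] ++ u := rfl
  rw [this, bef_append_iff]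
  simp [bef_singleton]
  tauto

theorem bef_pair {α : Type*} {a b p q : α} (h : Bef [a, b] p q) : p = a ∧ q = b := by
  rcases bef_cons_iff.1 h with ⟨rfl, hq⟩ | h
  · simpa using hq
  · exact absurd h bef_singleton

theorem bef_irrefl {α : Type*} {u : List α} (hu : u.Nodup) {p : α} : ¬ Bef u p p := by
  intro h
  rcases bef_iff_split.1 h with ⟨s, r, rfl, hp1, hp2⟩
  exact (List.disjoint_of_nodup_append hu) hp1 hp2

theorem bef_trans {α : Type*} {u : List α} (hu : u.Nodup) {p q r : α}
    (h1 : Bef u p q) (h2 : Bef u q r) : Bef u p r := by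
  rcases bef_iff_split.1 h1 with ⟨s₁, r₁, rfl, hp, hq⟩
  rcases bef_iff_split.1 h2 with ⟨s₂, r₂, he, hq', hr⟩
  rcases le_or_gt s₁.length s₂.length with hle | hlt
  · have hs : s₁ = s₂.take s₁.length := by
      have := congrArg (List.take s₁.length) he
      rwa [List.take_left, List.take_append_of_le_length hle] at this
    refine bef_iff_split.2 ⟨s₂, r₂, he, ?_, hr⟩
    rw [hs] at hp; exact List.mem_of_mem_take hp
  · have hs : s₂ = s₁.take s₂.length := by
      have := congrArg (List.take s₂.length) he
      rw [List.take_left, List.take_append_of_le_length hlt.le] at this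
      exact this.symm
    exfalso
    have : q ∈ s₁ := by rw [hs] at hq'; exact List.mem_of_mem_take hq'
    exact (List.disjoint_of_nodup_append hu) this hq

theorem bef_antisymm {α : Type*} {u : List α} (hu : u.Nodup) {p q : α}
    (h1 : Bef u p q) (h2 : Bef u q p) : False :=
  bef_irrefl hu (bef_trans hu h1 h2)

theorem bef_total {α : Type*} {u : List α} {p q : α}
    (hp : p ∈ u) (hq : q ∈ u) (hne : p ≠ q) : Bef u p q ∨ Bef u q p := by
  induction u with
  | nil => simp at hp
  | cons a u ih =>
    rcases List.mem_cons.1 hp with rfl | hp'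
    · have hq' : q ∈ u := by
        rcases List.mem_cons.1 hq with rfl | h; exact absurd rfl hne; exact h
      exact Or.inl (bef_cons_iff.2 (Or.inl ⟨rfl, hq'⟩))
    · rcases List.mem_cons.1 hq with rfl | hq'
      · exact Or.inr (bef_cons_iff.2 (Or.inl ⟨rfl, hp'⟩))
      · rcases ih hp' hq' with h | h
        · exact Or.inl (bef_cons_iff.2 (Or.inr h))
        · exact Or.inr (bef_cons_iff.2 (Or.inr h))

theorem bef_concat_iff {α : Type*} {u : List α} {x p q : α} :
    Bef (u ++ [x]) p q ↔ Bef u p q ∨ (p ∈ u ∧ q = x) := by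
  rw [bef_append_iff]
  simp [bef_singleton]

theorem bef_erase_of_ne {α : Type*} [DecidableEq α] {u : List α} {z p q : α}
    (hp : p ≠ z) (hq : q ≠ z) (h : Bef u p q) : Bef (u.erase z) p q := by
  rcases bef_iff_split.1 h with ⟨s, r, rfl, hps, hqr⟩
  by_cases hzs : z ∈ s
  · rw [List.erase_append_left _ hzs]
    exact bef_append ((List.mem_erase_of_ne hp).2 hps) hqr
  · rw [List.erase_append_right _ hzs]
    exact bef_append hps ((List.mem_erase_of_ne hq).2 hqr)

theorem bef_reverse_iff {α : Type*} {u : List α} {p q : α} :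
    Bef u.reverse p q ↔ Bef u q p := by
  constructor
  · intro h
    have := h.reverse
    simpa [Bef] using this
  · intro h
    have := h.reverse
    simpa [Bef] using this

theorem bef_filterMap {α β : Type*} {f : α → Option β} {L : List α} {p q : β}
    (h : Bef (L.filterMap f) p q) :
    ∃ a b, Bef L a b ∧ f a = some p ∧ f b = some q := by
  induction L with
  | nil => simp [List.filterMap_nil] at h; exact absurd h bef_nil
  | cons c L ih =>
    rw [List.filterMap_cons] at h
    rcases hfc : f c with _ | v
    · rw [hfc] at h
      rcases ih h with ⟨a, b, hab, ha, hb⟩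
      exact ⟨a, b, hab.mono (List.sublist_cons_self _ _), ha, hb⟩
    · rw [hfc] at h
      rcases bef_cons_iff.1 h with ⟨rfl, hq⟩ | h'
      · rcases List.mem_filterMap.1 hq with ⟨b, hb, hfb⟩
        refine ⟨c, b, ?_, hfc, hfb⟩
        exact bef_cons_iff.2 (Or.inl ⟨rfl, hb⟩)
      · rcases ih h' with ⟨a, b, hab, ha, hb⟩
        exact ⟨a, b, hab.mono (List.sublist_cons_self _ _), ha, hb⟩

theorem bef_filterMap_of_bef {α β : Type*} {f : α → Option β} {L : List α} {a b : α} {p q : β}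
    (h : Bef L a b) (ha : f a = some p) (hb : f b = some q) :
    Bef (L.filterMap f) p q := by
  rcases bef_iff_split.1 h with ⟨s, r, rfl, has, hbr⟩
  rw [List.filterMap_append]
  exact bef_append (List.mem_filterMap.2 ⟨a, has, ha⟩) (List.mem_filterMap.2 ⟨b, hbr, hb⟩)

/-! ### Adjacent swaps and the weak order -/

theorem adjswap_bef {l r : List ℕ} {x y p q : ℕ}
    (h : Bef (l ++ x :: y :: r) p q) :
    (p = x ∧ q = y) ∨ Bef (l ++ y :: x :: r) p q := by
  rcases bef_append_iff.1 h with h1 | h2 | ⟨hp, hq⟩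
  · exact Or.inr (bef_append_iff.2 (Or.inl h1))
  · rcases bef_cons_iff.1 h2 with ⟨rfl, hq⟩ | h3
    · rcases List.mem_cons.1 hq with rfl | hq'
      · exact Or.inl ⟨rfl, rfl⟩
      · refine Or.inr (bef_append_iff.2 (Or.inr (Or.inl ?_)))
        exact bef_cons_iff.2 (Or.inr (bef_cons_iff.2 (Or.inl ⟨rfl, hq'⟩)))
    · rcases bef_cons_iff.1 h3 with ⟨rfl, hq⟩ | h4
      · refine Or.inr (bef_append_iff.2 (Or.inr (Or.inl ?_)))
        exact bef_cons_iff.2 (Or.inl ⟨rfl, List.mem_cons_of_mem _ hq⟩)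
      · refine Or.inr (bef_append_iff.2 (Or.inr (Or.inl ?_)))
        exact bef_cons_iff.2 (Or.inr (bef_cons_iff.2 (Or.inr h4)))
  · rcases List.mem_cons.1 hq with rfl | hq'
    · refine Or.inr (bef_append_iff.2 (Or.inr (Or.inr ⟨hp, ?_⟩)))
      exact List.mem_cons_of_mem _ (List.mem_cons_self)
    · rcases List.mem_cons.1 hq' with rfl | hq''
      · exact Or.inr (bef_append_iff.2 (Or.inr (Or.inr ⟨hp, List.mem_cons_self⟩)))
      · exact Or.inr (bef_append_iff.2 (Or.inr (Or.inr
          ⟨hp, List.mem_cons_of_mem _ (List.mem_cons_of_mem _ hq'')⟩)))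

theorem adjSwap_perm {w w' : List ℕ} (h : AdjSwap w w') : w.Perm w' := by
  rcases h with ⟨l, r, x, y, _, rfl, rfl⟩
  exact (List.perm_append_left_iff l).2 (List.Perm.swap' _ _ (List.Perm.refl r))

theorem wordWeakLe_perm {w w' : List ℕ} (h : WordWeakLe w w') : w.Perm w' := by
  induction h with
  | refl => exact List.Perm.refl _
  | tail _ hstep ih => exact ih.trans (adjSwap_perm hstep)

theorem wordWeakLe_bef_mono {w w' : List ℕ} (h : WordWeakLe w w') {p q : ℕ}
    (hlt : q < p) (hb : Bef w p q) : Bef w' p q := by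
  induction h with
  | refl => exact hb
  | tail _ hstep ih =>
    rcases hstep with ⟨l, r, x, y, hxy, rfl, rfl⟩
    rcases adjswap_bef ih with ⟨rfl, rfl⟩ | h'
    · omega
    · exact h'

theorem eq_of_bef_agree : ∀ {u v : List ℕ}, u.Nodup → u.Perm v →
    (∀ p q, Bef u p q → Bef v p q) → u = v := by
  intro u
  induction u with
  | nil => intro v _ hp _; exact hp.nil_eq
  | cons a u ih =>
    intro v hu hp hagree
    cases v with
    | nil => exact absurd hp.symm.nil_eq (by simp)
    | cons b v' =>
      have hv : (b :: v').Nodup := hp.nodup_iff.1 hu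
      have hba : b = a := by
        by_contra hne
        have hbu : b ∈ a :: u := hp.mem_iff.2 (List.mem_cons_self)
        have hbu' : b ∈ u := by
          rcases List.mem_cons.1 hbu with h | h
          · exact absurd h hne
          · exact h
        have h1 : Bef (b :: v') a b := hagree a b (bef_cons_iff.2 (Or.inl ⟨rfl, hbu'⟩))
        have hav : a ∈ b :: v' := hp.mem_iff.1 (List.mem_cons_self)
        have hav' : a ∈ v' := by
          rcases List.mem_cons.1 hav with h | h
          · exact absurd h.symm hne
          · exact h
        exact bef_antisymm hv h1 (bef_cons_iff.2 (Or.inl ⟨rfl, hav'⟩))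
      subst hba
      have hp' : u.Perm v' := hp.cons_inv
      have hagree' : ∀ p q, Bef u p q → Bef v' p q := by
        intro p q h
        have h2 := hagree p q (h.mono (List.sublist_cons_self _ _))
        rcases bef_cons_iff.1 h2 with ⟨rfl, _⟩ | h3
        · exact absurd h.mem_left (List.nodup_cons.1 hu).1
        · exact h3
      rw [ih (List.nodup_cons.1 hu).2 hp' hagree']

theorem exists_adj_disagree : ∀ {u : List ℕ} (v : List ℕ), u.Nodup → v.Nodup →
    (∀ z ∈ u, z ∈ v) →
    ∀ {p q}, Bef u p q → Bef v q p →
    ∃ l x y r, u = l ++ x :: y :: r ∧ Bef v y x := by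
  intro u
  induction u with
  | nil => intro v _ _ _ p q h _; exact absurd h bef_nil
  | cons a u ih =>
    intro v hu hv hsub p q hpq hvqp
    rcases bef_cons_iff.1 hpq with ⟨rfl, hq⟩ | h'
    · cases u with
      | nil => simp at hq
      | cons b u' =>
        by_cases hba : Bef v b p
        · exact ⟨[], p, b, u', rfl, hba⟩
        · have hab : Bef v p b := by
            have hbv : b ∈ v := hsub b (by simp)
            have hav : p ∈ v := hsub p (by simp)
            have hne : p ≠ b := by
              rintro rfl
              exact (List.nodup_cons.1 hu).1 (by simp)
            rcases bef_total hav hbv hne with h | h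
            · exact h
            · exact absurd h hba
          rcases List.mem_cons.1 hq with rfl | hq'
          · exact absurd hvqp hba
          · have h1 : Bef (b :: u') b q := bef_cons_iff.2 (Or.inl ⟨rfl, hq'⟩)
            have h2 : Bef v q b := bef_trans hv hvqp hab
            rcases ih v (List.nodup_cons.1 hu).2 hv
              (fun z hz => hsub z (List.mem_cons_of_mem _ hz)) h1 h2 with
              ⟨l, x, y, r, heq, hyx⟩
            exact ⟨p :: l, x, y, r, by rw [List.cons_append, ← heq], hyx⟩
    · rcases ih v (List.nodup_cons.1 hu).2 hv
        (fun z hz => hsub z (List.mem_cons_of_mem _ hz)) h' hvqp with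
        ⟨l, x, y, r, heq, hyx⟩
      exact ⟨a :: l, x, y, r, by rw [List.cons_append, ← heq], hyx⟩

open scoped Classical in
noncomputable def disCard (u v : List ℕ) : ℕ :=
  ((u.toFinset ×ˢ u.toFinset).filter (fun pq => Bef v pq.1 pq.2 ∧ Bef u pq.2 pq.1)).card

theorem wle_of_bef_mono : ∀ (D : ℕ), ∀ (u v : List ℕ), disCard u v ≤ D → u.Nodup → u.Perm v →
    (∀ p q, q < p → Bef u p q → Bef v p q) → WordWeakLe u v := by
  intro D
  induction D using Nat.strong_induction_on with
  | _ D ihD =>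
    intro u v hD hu hperm hmono
    classical
    have hv : v.Nodup := hperm.nodup_iff.1 hu
    by_cases huv : u = v
    · exact huv ▸ Relation.ReflTransGen.refl
    · have hdis : ∃ p q, Bef u p q ∧ Bef v q p := by
        by_contra hno
        push_neg at hno
        refine huv (eq_of_bef_agree hu hperm ?_)
        intro p q h
        have hpq : p ≠ q := fun he => bef_irrefl hu (he ▸ h)
        rcases bef_total (hperm.mem_iff.1 h.mem_left) (hperm.mem_iff.1 h.mem_right) hpq with
          h1 | h1
        · exact h1
        · exact absurd h1 (hno p q h)
      rcases hdis with ⟨p, q, hupq, hvqp⟩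
      rcases exists_adj_disagree v hu hv (fun z hz => hperm.mem_iff.1 hz) hupq hvqp with
        ⟨l, x, y, r, heq, hyx⟩
      have hbxy : Bef u x y := by
        rw [heq]
        exact bef_append_iff.2 (Or.inr (Or.inl (bef_cons_iff.2 (Or.inl ⟨rfl, by simp⟩))))
      have hxney : x ≠ y := fun he => bef_irrefl hu (he ▸ hbxy)
      have hxy : x < y := by
        rcases lt_or_gt_of_ne hxney with h | h
        · exact h
        · exact absurd (hmono x y h hbxy) (fun hc => bef_antisymm hv hc hyx)
      set u' := l ++ y :: x :: r with hu'def
      have hstep : AdjSwap u u' := ⟨l, r, x, y, hxy, heq, rfl⟩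
      have hpuu' : u.Perm u' := adjSwap_perm hstep
      have hu'n : u'.Nodup := hpuu'.nodup_iff.1 hu
      have hperm' : u'.Perm v := hpuu'.symm.trans hperm
      have hcases : ∀ p q, Bef u' p q → (p = y ∧ q = x) ∨ Bef u p q := by
        intro p q h
        rw [heq]
        exact adjswap_bef h
      have hmono' : ∀ p q, q < p → Bef u' p q → Bef v p q := by
        intro p q hlt h
        rcases hcases p q h with ⟨rfl, rfl⟩ | h'
        · exact hyx
        · exact hmono p q hlt h'
      have hbyx' : Bef u' y x :=
        bef_append_iff.2 (Or.inr (Or.inl (bef_cons_iff.2 (Or.inl ⟨rfl, by simp⟩))))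
      have hlt : disCard u' v < disCard u v := by
        have htf : u'.toFinset = u.toFinset := List.toFinset_eq_of_perm _ _ hpuu'.symm
        apply Finset.card_lt_card
        rw [Finset.ssubset_iff_of_subset]
        · refine ⟨(y, x), ?_, ?_⟩
          · simp only [Finset.mem_filter, Finset.mem_product, List.mem_toFinset]
            exact ⟨⟨hbxy.mem_right, hbxy.mem_left⟩, hyx, hbxy⟩
          · simp only [Finset.mem_filter, Finset.mem_product, List.mem_toFinset, htf]
            rintro ⟨-, -, hc⟩
            exact bef_antisymm hu'n hc hbyx'
        · intro pq hpq'
          simp only [Finset.mem_filter, Finset.mem_product, List.mem_toFinset, htf] at hpq' ⊢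
          obtain ⟨⟨m1, m2⟩, hb1, hb2⟩ := hpq'
          refine ⟨⟨m1, m2⟩, hb1, ?_⟩
          rcases hcases _ _ hb2 with ⟨he2, he1⟩ | h'
          · subst he1; subst he2
            exact absurd hb1 (fun hc => bef_antisymm hv hc hyx)
          · exact h'
      have := ihD (disCard u' v) (lt_of_lt_of_le hlt hD) u' v le_rfl hu'n hperm' hmono'
      exact Relation.ReflTransGen.head hstep this

/-! ### Tableau structure -/

/-- top entry of a column -/
def tp (c : List ℕ) : ℕ := c.headD 0
/-- bottom entry of a column -/
def bt (c : List ℕ) : ℕ := c.getLastD 0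

/-- `Std t`: standardness data for a tableau with distinct entries. -/
def Std (t : List (List ℕ)) : Prop :=
  (∀ c ∈ t, c.length = 1 ∨ c.length = 2) ∧
  (∀ c ∈ t, c.length = 2 → bt c < tp c) ∧
  (∀ a b, Bef t a b → ∀ x ∈ b, x < tp a) ∧
  t.flatten.Nodup

/-- `Lin t w`: `w` is a linear extension of the canonical poset of `t`. -/
def Lin (t : List (List ℕ)) (w : List ℕ) : Prop :=
  (∀ a b, Bef t a b → Bef w (bt b) (bt a)) ∧
  (∀ c ∈ t, c.length = 2 → Bef w (tp c) (bt c))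

theorem col_one {c : List ℕ} (h : c.length = 1) : c = [bt c] ∧ tp c = bt c := by
  rcases c with _ | ⟨a, _ | ⟨b, c⟩⟩ <;> simp_all [bt, tp]

theorem col_two {c : List ℕ} (h : c.length = 2) : c = [tp c, bt c] := by
  rcases c with _ | ⟨a, _ | ⟨b, _ | c⟩⟩ <;> simp_all [bt, tp]

theorem mem_col {c : List ℕ} (hlen : c.length = 1 ∨ c.length = 2) {y : ℕ} (hy : y ∈ c) :
    y = tp c ∨ y = bt c := by
  rcases hlen with h | h
  · rw [(col_one h).1] at hy; simp at hy; exact Or.inr hy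
  · rw [col_two h] at hy; simp at hy
    rcases hy with h | h
    · exact Or.inl h
    · exact Or.inr h

theorem col_ne_nil {c : List ℕ} (hlen : c.length = 1 ∨ c.length = 2) : c ≠ [] := by
  rcases hlen with h | h <;> exact List.ne_nil_of_length_pos (by omega)

theorem tp_mem {c : List ℕ} (hc : c ≠ []) : tp c ∈ c := by
  rcases c with _ | ⟨a, c⟩
  · simp at hc
  · simp [tp]

theorem bt_mem {c : List ℕ} (hc : c ≠ []) : bt c ∈ c := by
  have : bt c = c.getLast hc := by
    simp [bt, List.getLastD_eq_getLast?, List.getLast?_eq_getLast hc]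
  rw [this]
  exact List.getLast_mem hc

theorem getLast?_eq_bt {c : List ℕ} (hc : c ≠ []) : c.getLast? = some (bt c) := by
  rw [List.getLast?_eq_getLast hc]
  simp [bt, List.getLastD_eq_getLast?, List.getLast?_eq_getLast hc]

theorem head?_eq_tp {c : List ℕ} (hc : c ≠ []) : c.head? = some (tp c) := by
  rcases c with _ | ⟨a, c⟩
  · simp at hc
  · simp [tp]

theorem Std.tail {c : List ℕ} {t : List (List ℕ)} : Std (c :: t) → Std t := by
  rintro ⟨h1, h2, h3, h4⟩
  refine ⟨fun d hd => h1 d (List.mem_cons_of_mem _ hd),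
    fun d hd => h2 d (List.mem_cons_of_mem _ hd),
    fun a b hab => h3 a b (hab.mono (List.sublist_cons_self _ _)), ?_⟩
  rw [List.flatten_cons] at h4
  exact (List.nodup_append.1 h4).2.1

theorem mem_flatten_of_mem_col {t : List (List ℕ)} {c : List ℕ} {y : ℕ}
    (hc : c ∈ t) (hy : y ∈ c) : y ∈ t.flatten := List.mem_flatten.2 ⟨c, hc, hy⟩

theorem std_distinct {t : List (List ℕ)} (ht : Std t) {a b : List ℕ} {p q : ℕ}
    (hab : Bef t a b) (hp : p ∈ a) (hq : q ∈ b) : p ≠ q := by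
  rcases bef_iff_split.1 hab with ⟨s, r, heq, has, hbr⟩
  have h4 := ht.2.2.2
  rw [heq, List.flatten_append] at h4
  intro he
  exact (List.disjoint_of_nodup_append h4) (mem_flatten_of_mem_col has hp)
    (he ▸ mem_flatten_of_mem_col hbr hq)

/-! ### minWord and maxWord -/

theorem minWord_cons (c : List ℕ) (t : List (List ℕ)) :
    minWord (c :: t) = minWord t ++ c := by
  simp [minWord]

theorem minWord_perm (t : List (List ℕ)) : (minWord t).Perm t.flatten := by
  induction t with
  | nil => simp [minWord]
  | cons c t ih =>
    rw [minWord_cons, List.flatten_cons]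
    exact List.perm_append_comm.trans (List.Perm.append_left c ih)

theorem bef_minWord_cases {t : List (List ℕ)} {p q : ℕ} (h : Bef (minWord t) p q) :
    (∃ a b, Bef t b a ∧ p ∈ a ∧ q ∈ b) ∨ (∃ a ∈ t, Bef a p q) := by
  induction t with
  | nil => exact absurd h bef_nil
  | cons c t ih =>
    rw [minWord_cons] at h
    rcases bef_append_iff.1 h with h1 | h2 | ⟨hp, hq⟩
    · rcases ih h1 with ⟨a, b, hab, hpa, hqb⟩ | ⟨a, ha, hb⟩
      · exact Or.inl ⟨a, b, hab.mono (List.sublist_cons_self _ _), hpa, hqb⟩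
      · exact Or.inr ⟨a, List.mem_cons_of_mem _ ha, hb⟩
    · exact Or.inr ⟨c, List.mem_cons_self, h2⟩
    · have := (minWord_perm t).mem_iff.1 hp
      rcases List.mem_flatten.1 this with ⟨a, ha, hpa⟩
      exact Or.inl ⟨a, c, bef_cons_iff.2 (Or.inl ⟨rfl, ha⟩), hpa, hq⟩

theorem bef_minWord_of_col_lt {t : List (List ℕ)} {a b : List ℕ} {p q : ℕ}
    (hab : Bef t b a) (hp : p ∈ a) (hq : q ∈ b) : Bef (minWord t) p q := by
  induction t with
  | nil => exact absurd hab bef_nil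
  | cons c t ih =>
    rw [minWord_cons]
    rcases bef_cons_iff.1 hab with ⟨rfl, ha⟩ | h'
    · exact bef_append ((minWord_perm t).mem_iff.2 (mem_flatten_of_mem_col ha hp)) hq
    · exact (ih h').mono (List.sublist_append_left _ _)

theorem bef_minWord_of_mem {t : List (List ℕ)} {a : List ℕ} {p q : ℕ}
    (ha : a ∈ t) (h : Bef a p q) : Bef (minWord t) p q := by
  induction t with
  | nil => simp at ha
  | cons c t ih =>
    rw [minWord_cons]
    rcases List.mem_cons.1 ha with rfl | ha'
    · exact h.mono (List.sublist_append_right _ _)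
    · exact (ih ha').mono (List.sublist_append_left _ _)

theorem ftop_eq_some {c : List ℕ} {p : ℕ} :
    (if c.length = 2 then c.head? else none) = some p ↔ c.length = 2 ∧ p = tp c := by
  by_cases h : c.length = 2
  · rw [if_pos h, head?_eq_tp (col_ne_nil (Or.inr h))]
    simp [h, eq_comm]
  · simp [h]

theorem getLast?_eq_some_iff {c : List ℕ} {q : ℕ} :
    c.getLast? = some q ↔ c ≠ [] ∧ q = bt c := by
  rcases eq_or_ne c [] with rfl | hc
  · simp
  · rw [getLast?_eq_bt hc]
    simp [hc, eq_comm]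

theorem maxWord_eq (t : List (List ℕ)) :
    maxWord t = (t.filterMap fun c => if c.length = 2 then c.head? else none) ++
      (t.filterMap List.getLast?).reverse := rfl

theorem mem_maxWord {t : List (List ℕ)} (hh : ∀ c ∈ t, c.length = 1 ∨ c.length = 2)
    {y : ℕ} : y ∈ maxWord t ↔ y ∈ t.flatten := by
  rw [maxWord_eq]
  simp only [List.mem_append, List.mem_reverse, List.mem_filterMap]
  constructor
  · rintro (⟨c, hc, hfc⟩ | ⟨c, hc, hfc⟩)
    · obtain ⟨h2, rfl⟩ := ftop_eq_some.1 hfc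
      exact mem_flatten_of_mem_col hc (tp_mem (col_ne_nil (Or.inr h2)))
    · rcases getLast?_eq_some_iff.1 hfc with ⟨hne, rfl⟩
      exact mem_flatten_of_mem_col hc (bt_mem hne)
  · intro hy
    rcases List.mem_flatten.1 hy with ⟨c, hc, hyc⟩
    rcases mem_col (hh c hc) hyc with rfl | rfl
    · rcases hh c hc with h1 | h2
      · exact Or.inr ⟨c, hc, by rw [(col_one h1).2, getLast?_eq_bt (col_ne_nil (Or.inl h1))]⟩
      · exact Or.inl ⟨c, hc, ftop_eq_some.2 ⟨h2, rfl⟩⟩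
    · exact Or.inr ⟨c, hc, getLast?_eq_bt (col_ne_nil (hh c hc))⟩

theorem bef_maxWord_top_bot {t : List (List ℕ)} {a b : List ℕ}
    (ha : a ∈ t) (ha2 : a.length = 2) (hb : b ∈ t) (hbne : b ≠ []) :
    Bef (maxWord t) (tp a) (bt b) := by
  rw [maxWord_eq]
  refine bef_append (List.mem_filterMap.2 ⟨a, ha, ftop_eq_some.2 ⟨ha2, rfl⟩⟩) ?_
  rw [List.mem_reverse]
  exact List.mem_filterMap.2 ⟨b, hb, getLast?_eq_bt hbne⟩

theorem bef_maxWord_bots {t : List (List ℕ)} {a b : List ℕ} (hab : Bef t a b)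
    (ha : a ≠ []) (hb : b ≠ []) : Bef (maxWord t) (bt b) (bt a) := by
  rw [maxWord_eq]
  refine Bef.mono ?_ (List.sublist_append_right _ _)
  rw [bef_reverse_iff]
  exact bef_filterMap_of_bef hab (getLast?_eq_bt ha) (getLast?_eq_bt hb)

theorem bef_maxWord_cases {t : List (List ℕ)} {p q : ℕ} (h : Bef (maxWord t) p q) :
    (∃ a b, Bef t a b ∧ a.length = 2 ∧ b.length = 2 ∧ p = tp a ∧ q = tp b) ∨
    (∃ a b, Bef t a b ∧ b ≠ [] ∧ a ≠ [] ∧ p = bt b ∧ q = bt a) ∨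
    ((∃ a ∈ t, a.length = 2 ∧ p = tp a) ∧ (∃ b ∈ t, b ≠ [] ∧ q = bt b)) := by
  rw [maxWord_eq] at h
  rcases bef_append_iff.1 h with h1 | h2 | ⟨hp, hq⟩
  · rcases bef_filterMap h1 with ⟨a, b, hab, hfa, hfb⟩
    rcases ftop_eq_some.1 hfa with ⟨ha2, rfl⟩
    rcases ftop_eq_some.1 hfb with ⟨hb2, rfl⟩
    exact Or.inl ⟨a, b, hab, ha2, hb2, rfl, rfl⟩
  · rw [bef_reverse_iff] at h2
    rcases bef_filterMap h2 with ⟨a, b, hab, hfa, hfb⟩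
    rcases getLast?_eq_some_iff.1 hfa with ⟨hane, rfl⟩
    rcases getLast?_eq_some_iff.1 hfb with ⟨hbne, rfl⟩
    exact Or.inr (Or.inl ⟨a, b, hab, hbne, hane, rfl, rfl⟩)
  · rcases List.mem_filterMap.1 hp with ⟨a, ha, hfa⟩
    rcases ftop_eq_some.1 hfa with ⟨ha2, rfl⟩
    rw [List.mem_reverse] at hq
    rcases List.mem_filterMap.1 hq with ⟨b, hb, hfb⟩
    rcases getLast?_eq_some_iff.1 hfb with ⟨hbne, rfl⟩
    exact Or.inr (Or.inr ⟨⟨a, ha, ha2, rfl⟩, ⟨b, hb, hbne, rfl⟩⟩)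

theorem maxWord_perm {t : List (List ℕ)} (hh : ∀ c ∈ t, c.length = 1 ∨ c.length = 2) :
    (maxWord t).Perm t.flatten := by
  induction t with
  | nil => simp [maxWord_eq]
  | cons c t ih =>
    have ihp := ih (fun d hd => hh d (List.mem_cons_of_mem _ hd))
    have hc := hh c (List.mem_cons_self)
    have hbots : (c :: t).filterMap List.getLast? =
        bt c :: t.filterMap List.getLast? := by
      rw [List.filterMap_cons, getLast?_eq_bt (col_ne_nil hc)]
    rcases hc with h1 | h2
    · have htops : (c :: t).filterMap (fun c => if c.length = 2 then c.head? else none) =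
          t.filterMap (fun c => if c.length = 2 then c.head? else none) := by
        rw [List.filterMap_cons, if_neg (by omega)]
      rw [maxWord_eq, htops, hbots, List.reverse_cons, ← List.append_assoc, List.flatten_cons,
        (col_one h1).1, ← maxWord_eq]
      exact List.perm_append_comm.trans (List.Perm.append_left _ ihp)
    · have htops : (c :: t).filterMap (fun c => if c.length = 2 then c.head? else none) =
          tp c :: t.filterMap (fun c => if c.length = 2 then c.head? else none) := by
        rw [List.filterMap_cons, if_pos h2, head?_eq_tp (col_ne_nil (Or.inr h2))]
      rw [maxWord_eq, htops, hbots, List.reverse_cons, List.flatten_cons, col_two h2,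
        List.cons_append]
      refine List.Perm.cons _ ?_
      rw [← List.append_assoc, ← maxWord_eq]
      exact List.perm_append_comm.trans (List.Perm.append_left _ ihp)

/-! ### Linear extensions vs inversions of minWord / maxWord -/

theorem lin_col_bt {t : List (List ℕ)} {w : List ℕ} (ht : Std t) (hl : Lin t w)
    {a : List ℕ} (ha : a ∈ t) {p : ℕ} (hp : p ∈ a) : p = bt a ∨ Bef w p (bt a) := by
  rcases mem_col (ht.1 a ha) hp with rfl | rfl
  · rcases ht.1 a ha with h1 | h2
    · exact Or.inl (col_one h1).2
    · exact Or.inr (hl.2 a ha h2)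
  · exact Or.inl rfl

theorem F1 {t : List (List ℕ)} {w : List ℕ} (ht : Std t) (hw : w.Nodup) (hl : Lin t w) :
    ∀ p q, q < p → Bef (minWord t) p q → Bef w p q := by
  intro p q hlt h
  rcases bef_minWord_cases h with ⟨a, b, hab, hpa, hqb⟩ | ⟨a, ha, hpq⟩
  · have hqbt : q = bt b := by
      rcases mem_col (ht.1 b hab.mem_left) hqb with rfl | rfl
      · exact absurd (ht.2.2.1 b a hab p hpa) (by omega)
      · rfl
    subst hqbt
    have h1 : Bef w (bt a) (bt b) := hl.1 b a hab
    rcases lin_col_bt ht hl hab.mem_right hpa with rfl | h2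
    · exact h1
    · exact bef_trans hw h2 h1
  · rcases ht.1 a ha with h1 | h2
    · rw [(col_one h1).1] at hpq
      exact absurd hpq bef_singleton
    · rw [col_two h2] at hpq
      obtain ⟨rfl, rfl⟩ := bef_pair hpq
      exact hl.2 a ha h2

theorem F2 {t : List (List ℕ)} {w : List ℕ} (ht : Std t) (hw : w.Nodup)
    (hperm : w.Perm t.flatten) (hl : Lin t w) :
    ∀ p q, q < p → Bef w p q → Bef (maxWord t) p q := by
  intro p q hlt h
  have hmem : ∀ z ∈ w, z ∈ maxWord t := fun z hz =>
    (mem_maxWord ht.1).2 (hperm.mem_iff.1 hz)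
  have hne : p ≠ q := by omega
  rcases bef_total (hmem p h.mem_left) (hmem q h.mem_right) hne with h1 | h1
  · exact h1
  exfalso
  rcases bef_maxWord_cases h1 with ⟨a, b, hab, ha2, hb2, hqa, hpb⟩ |
    ⟨a, b, hab, hbne, hane, hqb, hpa⟩ | ⟨⟨a, ha, ha2, hqa⟩, ⟨b, hb, hbne, hpb⟩⟩
  · subst hqa; subst hpb
    exact absurd (ht.2.2.1 a b hab _ (tp_mem (col_ne_nil (Or.inr hb2)))) (by omega)
  · subst hqb; subst hpa
    exact bef_antisymm hw h (hl.1 a b hab)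
  · subst hqa; subst hpb
    by_cases heq : a = b
    · subst heq
      exact absurd (ht.2.1 a ha ha2) (by omega)
    · rcases bef_total ha hb heq with h2 | h2
      · exact absurd (ht.2.2.1 a b h2 _ (bt_mem hbne)) (by omega)
      · have h3 : Bef w (tp a) (bt a) := hl.2 a ha ha2
        have h4 : Bef w (bt a) (bt b) := hl.1 b a h2
        exact bef_antisymm hw h (bef_trans hw h3 h4)

theorem F3 {t : List (List ℕ)} {w : List ℕ} (ht : Std t) (hw : w.Nodup)
    (hperm : w.Perm t.flatten)
    (hmin : ∀ p q, q < p → Bef (minWord t) p q → Bef w p q)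
    (hmax : ∀ p q, q < p → Bef w p q → Bef (maxWord t) p q) : Lin t w := by
  have hmaxnd : (maxWord t).Nodup := (maxWord_perm ht.1).nodup_iff.2 ht.2.2.2
  have hmem : ∀ z ∈ t.flatten, z ∈ w := fun z hz => hperm.mem_iff.2 hz
  constructor
  · intro a b hab
    have hane : a ≠ [] := col_ne_nil (ht.1 a hab.mem_left)
    have hbne : b ≠ [] := col_ne_nil (ht.1 b hab.mem_right)
    have hneq : bt b ≠ bt a :=
      fun he => std_distinct ht hab (bt_mem hane) (bt_mem hbne) he.symm
    rcases lt_or_gt_of_ne hneq with hlt | hlt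
    · -- bt b < bt a : cannot use min; use max + totality
      have hmaxpos : Bef (maxWord t) (bt b) (bt a) := bef_maxWord_bots hab hane hbne
      by_contra hc
      have h2 : Bef w (bt a) (bt b) := by
        rcases bef_total (hmem _ (mem_flatten_of_mem_col hab.mem_right (bt_mem hbne)))
          (hmem _ (mem_flatten_of_mem_col hab.mem_left (bt_mem hane))) hneq with h | h
        · exact absurd h hc
        · exact h
      exact bef_antisymm hmaxnd (hmax _ _ hlt h2) hmaxpos
    · -- bt a < bt b : min positional
      exact hmin _ _ hlt (bef_minWord_of_col_lt hab (bt_mem hbne) (bt_mem hane))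
  · intro c hc h2
    have hlt : bt c < tp c := ht.2.1 c hc h2
    refine hmin _ _ hlt (bef_minWord_of_mem hc ?_)
    rw [col_two h2]
    exact List.Sublist.refl _

theorem lin_last {c : List ℕ} {t' : List (List ℕ)} {w w₀ : List ℕ} {x : ℕ}
    (ht : Std (c :: t')) (hw : w.Nodup) (hperm : w.Perm (c :: t').flatten)
    (hl : Lin (c :: t') w) (hcat : w = w₀ ++ [x]) : x = bt c := by
  have claim : ∀ y ∈ w, y ≠ bt c → Bef w y (bt c) := by
    intro y hy hne
    rcases List.mem_flatten.1 (hperm.mem_iff.1 hy) with ⟨b, hb, hyb⟩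
    rcases List.mem_cons.1 hb with rfl | hb'
    · rcases mem_col (ht.1 b (List.mem_cons_self)) hyb with rfl | rfl
      · rcases ht.1 b (List.mem_cons_self) with h1 | h2
        · exact absurd (col_one h1).2 hne
        · exact hl.2 b (List.mem_cons_self) h2
      · exact absurd rfl hne
    · have hcb : Bef (c :: t') c b := bef_cons_iff.2 (Or.inl ⟨rfl, hb'⟩)
      have h1 : Bef w (bt b) (bt c) := hl.1 c b hcb
      rcases lin_col_bt ht hl hb hyb with rfl | h2
      · exact h1
      · exact bef_trans hw h2 h1
  by_contra hne
  have hx : x ∈ w := by rw [hcat]; simp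
  have h1 : Bef w x (bt c) := claim x hx hne
  rw [hcat] at h1
  rcases bef_concat_iff.1 h1 with h2 | ⟨h2, h3⟩
  · have : x ∈ w₀ := h2.mem_left
    rw [hcat] at hw
    exact (List.disjoint_of_nodup_append hw) this (by simp)
  · exact hne h3.symm

/-! ### Unfolding the insertion algorithm -/

theorem getLast!_concat' (w₀ : List ℕ) (x : ℕ) : (w₀ ++ [x]).getLast! = x :=
  List.getLast!_of_getLast? (List.getLast?_concat)

theorem insertColsAux_eq : ∀ (f : ℕ) (w : List ℕ), w.length ≤ f →
    insertColsAux f w = insertCols w := by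
  intro f
  induction f using Nat.strong_induction_on with
  | _ f ih =>
    intro w hw
    match f, w with
    | 0, w =>
      obtain rfl : w = [] := List.length_eq_zero_iff.1 (Nat.le_zero.1 hw)
      rfl
    | g + 1, [] => rfl
    | g + 1, y :: ys =>
      rw [insertCols]
      show insertColsAux (g + 1) (y :: ys) = insertColsAux ((y :: ys).length) (y :: ys)
      have hl : (y :: ys).length = ys.length + 1 := rfl
      rw [hl]
      simp only [insertColsAux]
      have hdl : (y :: ys).dropLast.length = ys.length := by
        simp [List.length_dropLast]
      have hys : ys.length ≤ g := by
        have : (y :: ys).length = ys.length + 1 := rfl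
        omega
      rcases hm : (((y :: ys).dropLast).filter
          (fun z => decide ((y :: ys).getLast! < z))).max? with _ | m
      · dsimp only
        rw [ih g (by omega) _ (by omega), ih ys.length (by omega) _ (by omega)]
      · dsimp only
        have hsub := (List.erase_sublist (a := m) (l := (y :: ys).dropLast)).length_le
        rw [ih g (by omega) _ (by omega), ih ys.length (by omega) _ (by omega)]

theorem insertCols_concat (w₀ : List ℕ) (x : ℕ) :
    insertCols (w₀ ++ [x]) =
      match (w₀.filter (fun y => decide (x < y))).max? with
      | none => [x] :: insertCols w₀
      | some m => [m, x] :: insertCols (w₀.erase m) := by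
  rcases hc : w₀ ++ [x] with _ | ⟨y, ys⟩
  · exact absurd hc (by simp)
  · rw [insertCols]
    show insertColsAux ((y :: ys).length) (y :: ys) = _
    have hl : (y :: ys).length = ys.length + 1 := rfl
    rw [hl]
    simp only [insertColsAux]
    rw [← hc, getLast!_concat', List.dropLast_concat]
    have hlen : w₀.length ≤ ys.length := by
      have := congrArg List.length hc
      simp at this
      omega
    rcases hm : (w₀.filter (fun y => decide (x < y))).max? with _ | m
    · dsimp only
      rw [insertColsAux_eq _ _ hlen]
    · dsimp only
      have hsub := (List.erase_sublist (a := m) (l := w₀)).length_le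
      rw [insertColsAux_eq _ _ (by omega)]

/-! ### Insertion computes exactly the linear extensions -/

theorem lin_nil (w : List ℕ) : Lin [] w :=
  ⟨fun _ _ h => absurd h bef_nil, fun c hc _ => absurd hc (by simp)⟩

theorem std_notmem {c : List ℕ} {t' : List (List ℕ)} (ht : Std (c :: t')) {y : ℕ}
    (hy : y ∈ c) : y ∉ t'.flatten := by
  have h4 := ht.2.2.2
  rw [List.flatten_cons] at h4
  exact fun h => (List.disjoint_of_nodup_append h4) hy h

theorem std_head_lt {c : List ℕ} {t' : List (List ℕ)} (ht : Std (c :: t')) :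
    ∀ y ∈ (c :: t').flatten, y ≠ tp c → y < tp c := by
  intro y hy hne
  rcases List.mem_flatten.1 hy with ⟨b, hb, hyb⟩
  rcases List.mem_cons.1 hb with rfl | hb'
  · rcases mem_col (ht.1 b (List.mem_cons_self)) hyb with rfl | rfl
    · exact absurd rfl hne
    · rcases ht.1 b (List.mem_cons_self) with h1 | h2
      · exact absurd (col_one h1).2.symm hne
      · exact ht.2.1 b (List.mem_cons_self) h2
  · exact ht.2.2.1 c b (bef_cons_iff.2 (Or.inl ⟨rfl, hb'⟩)) y hyb

theorem insert_iff_lin : ∀ (N : ℕ) (t : List (List ℕ)) (w : List ℕ), w.length ≤ N → Std t →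
    w.Nodup → w.Perm t.flatten → (insertCols w = t ↔ Lin t w) := by
  intro N
  induction N with
  | zero =>
    intro t w hlen ht hw hperm
    obtain rfl : w = [] := List.length_eq_zero_iff.1 (Nat.le_zero.1 hlen)
    cases t with
    | nil => exact iff_of_true rfl (lin_nil _)
    | cons c t' =>
      exfalso
      have h0 : (c :: t').flatten = [] := hperm.symm.eq_nil
      rw [List.flatten_cons] at h0
      exact col_ne_nil (ht.1 c (List.mem_cons_self)) (List.append_eq_nil_iff.1 h0).1
  | succ N ih =>
    intro t w hlen ht hw hperm
    cases t with
    | nil =>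
      obtain rfl : w = [] := List.Perm.eq_nil (by simpa using hperm)
      exact iff_of_true rfl (lin_nil _)
    | cons c t' =>
      have hcne : c ≠ [] := col_ne_nil (ht.1 c (List.mem_cons_self))
      obtain ⟨w₀, x, rfl⟩ : ∃ w₀ x, w = w₀ ++ [x] := by
        rcases List.eq_nil_or_concat w with rfl | ⟨L, b, h⟩
        · exfalso
          have h0 : (c :: t').flatten = [] := hperm.symm.eq_nil
          rw [List.flatten_cons] at h0
          exact hcne (List.append_eq_nil_iff.1 h0).1
        · exact ⟨L, b, by rw [h, List.concat_eq_append]⟩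
      have hM : tp c ∈ (c :: t').flatten :=
        mem_flatten_of_mem_col (List.mem_cons_self) (tp_mem hcne)
      have hMw : tp c ∈ w₀ ++ [x] := hperm.mem_iff.2 hM
      have hltM : ∀ y ∈ w₀ ++ [x], y ≠ tp c → y < tp c := fun y hy =>
        std_head_lt ht y (hperm.mem_iff.1 hy)
      have hnd0 : w₀.Nodup := (List.nodup_append.1 hw).1
      have hxnot : x ∉ w₀ := fun h => (List.disjoint_of_nodup_append hw) h (by simp)
      have hlen0 : w₀.length ≤ N := by
        have : (w₀ ++ [x]).length = w₀.length + 1 := by simp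
        omega
      rw [insertCols_concat]
      rcases hm : (w₀.filter (fun y => decide (x < y))).max? with _ | m
      · -- matched to nothing : x is the maximum
        have hfil : w₀.filter (fun y => decide (x < y)) = [] := List.max?_eq_none_iff.1 hm
        have hnolt : ∀ y ∈ w₀, ¬ x < y := by
          intro y hy hxy
          have h5 : y ∈ w₀.filter (fun y => decide (x < y)) :=
            List.mem_filter.2 ⟨hy, by simpa using hxy⟩
          rw [hfil] at h5
          simp at h5
        have hxM : x = tp c := by
          by_contra hne
          have hx1 : x < tp c := hltM x (by simp) hne
          have hMw0 : tp c ∈ w₀ := by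
            rcases List.mem_append.1 hMw with h | h
            · exact h
            · simp at h
              exact absurd h.symm hne
          exact hnolt _ hMw0 hx1
        dsimp only
        rcases ht.1 c (List.mem_cons_self) with h1 | h2
        · have hceq : c = [x] := by rw [(col_one h1).1, ← (col_one h1).2, hxM]
          have hperm' : w₀.Perm t'.flatten := by
            have h3 := hperm
            rw [List.flatten_cons, hceq] at h3
            exact ((List.perm_append_singleton x w₀).symm.trans h3).cons_inv
          have hiff := ih t' w₀ hlen0 ht.tail hnd0 hperm'
          constructor
          · intro heq
            injection heq with heq1 heq2
            have hlin' := hiff.1 heq2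
            refine ⟨?_, ?_⟩
            · intro a b hab
              rcases bef_cons_iff.1 hab with ⟨rfl, hb⟩ | hab'
              · have hbtc : bt a = x := by rw [hceq]; rfl
                rw [hbtc]
                refine bef_concat_iff.2 (Or.inr ⟨?_, rfl⟩)
                exact hperm'.mem_iff.2
                  (mem_flatten_of_mem_col hb (bt_mem (col_ne_nil (ht.tail.1 b hb))))
              · exact (hlin'.1 a b hab').mono (List.sublist_append_left _ _)
            · intro d hd h2d
              rcases List.mem_cons.1 hd with rfl | hd'
              · rw [hceq] at h2d
                simp at h2d
              · exact (hlin'.2 d hd' h2d).mono (List.sublist_append_left _ _)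
          · intro hlw
            have h1' : Lin t' w₀ := by
              constructor
              · intro a b hab
                have h2' := hlw.1 a b (hab.mono (List.sublist_cons_self _ _))
                rcases bef_concat_iff.1 h2' with h3 | ⟨h3, h4⟩
                · exact h3
                · exfalso
                  have h5 : bt a ∈ t'.flatten := mem_flatten_of_mem_col hab.mem_left
                    (bt_mem (col_ne_nil (ht.tail.1 a hab.mem_left)))
                  rw [h4, hxM] at h5
                  exact std_notmem ht (tp_mem hcne) h5
              · intro d hd h2d
                have h2' := hlw.2 d (List.mem_cons_of_mem _ hd) h2d
                rcases bef_concat_iff.1 h2' with h3 | ⟨h3, h4⟩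
                · exact h3
                · exfalso
                  have h5 : bt d ∈ t'.flatten :=
                    mem_flatten_of_mem_col hd (bt_mem (col_ne_nil (ht.tail.1 d hd)))
                  rw [h4, hxM] at h5
                  exact std_notmem ht (tp_mem hcne) h5
            rw [hiff.2 h1', hceq]
        · refine iff_of_false ?_ ?_
          · intro heq
            injection heq with heq1 _
            rw [← heq1] at h2
            simp at h2
          · intro hlw
            have hxbt := lin_last ht hw hperm hlw rfl
            have hbt := ht.2.1 c (List.mem_cons_self) h2
            omega
      · -- matched to m, necessarily the maximum tp c
        have hmem := List.max?_eq_some_iff'.1 hm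
        have hmf : m ∈ w₀ ∧ x < m := by
          have h5 := List.mem_filter.1 hmem.1
          exact ⟨h5.1, by simpa using h5.2⟩
        have hmM : m = tp c := by
          by_contra hne
          have hmlt : m < tp c := hltM m (List.mem_append_left _ hmf.1) hne
          have hxltM : x < tp c := lt_trans hmf.2 hmlt
          have hMw0 : tp c ∈ w₀ := by
            rcases List.mem_append.1 hMw with h | h
            · exact h
            · simp at h
              omega
          have h6 : tp c ∈ w₀.filter (fun y => decide (x < y)) :=
            List.mem_filter.2 ⟨hMw0, by simpa using hxltM⟩
          exact absurd (hmem.2 _ h6) (by omega)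
        subst hmM
        dsimp only
        rcases ht.1 c (List.mem_cons_self) with h1 | h2
        · refine iff_of_false ?_ ?_
          · intro heq
            injection heq with heq1 _
            rw [← heq1] at h1
            simp at h1
          · intro hlw
            have hxbt := lin_last ht hw hperm hlw rfl
            have htb := (col_one h1).2
            have := hmf.2
            omega
        · have hceq : c = [tp c, bt c] := col_two h2
          have hbtltM : bt c < tp c := ht.2.1 c (List.mem_cons_self) h2
          have hxneM : x ≠ tp c := by have := hmf.2; omega
          have hMw0 : tp c ∈ w₀ := by
            rcases List.mem_append.1 hMw with h | h
            · exact h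
            · simp at h
              exact absurd h.symm hxneM
          by_cases hxz : x = bt c
          · have hperm'' : (w₀.erase (tp c)).Perm t'.flatten := by
              have h3 := hperm
              rw [List.flatten_cons, hceq] at h3
              have h4 : (x :: w₀).Perm (tp c :: bt c :: t'.flatten) :=
                (List.perm_append_singleton x w₀).symm.trans h3
              have h5 : (x :: w₀).Perm (bt c :: tp c :: t'.flatten) :=
                h4.trans (List.Perm.swap _ _ _)
              rw [hxz] at h5
              have h6 : w₀.Perm (tp c :: t'.flatten) := h5.cons_inv
              have h7 := h6.erase (tp c)
              rwa [List.erase_cons_head] at h7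
            have hnd'' : (w₀.erase (tp c)).Nodup := hnd0.erase _
            have hlen'' : (w₀.erase (tp c)).length ≤ N := by
              have := (List.erase_sublist (a := tp c) (l := w₀)).length_le
              omega
            have hiff := ih t' (w₀.erase (tp c)) hlen'' ht.tail hnd'' hperm''
            have hne_of_mem : ∀ z ∈ t'.flatten, z ≠ x ∧ z ≠ tp c := by
              intro z hz
              constructor
              · intro hzz
                rw [hzz, hxz] at hz
                exact std_notmem ht (bt_mem hcne) hz
              · intro hzz
                rw [hzz] at hz
                exact std_notmem ht (tp_mem hcne) hz
            constructor
            · intro heq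
              injection heq with heq1 heq2
              have hlin' := hiff.1 heq2
              refine ⟨?_, ?_⟩
              · intro a b hab
                rcases bef_cons_iff.1 hab with ⟨heqa, hb⟩ | hab'
                · have hbtc : bt a = x := by rw [heqa, hceq, hxz]; rfl
                  rw [hbtc]
                  refine bef_concat_iff.2 (Or.inr ⟨?_, rfl⟩)
                  have h6 : bt b ∈ w₀.erase (tp c) := hperm''.mem_iff.2
                    (mem_flatten_of_mem_col hb (bt_mem (col_ne_nil (ht.tail.1 b hb))))
                  exact (List.erase_sublist).subset h6
                · exact (hlin'.1 a b hab').mono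
                    ((List.erase_sublist).trans (List.sublist_append_left _ _))
              · intro d hd h2d
                rcases List.mem_cons.1 hd with heqd | hd'
                · have hbtc : bt d = x := by rw [heqd, hceq, hxz]; rfl
                  have htpc : tp d = tp c := by rw [heqd]
                  rw [hbtc, htpc]
                  exact bef_concat_iff.2 (Or.inr ⟨hMw0, rfl⟩)
                · exact (hlin'.2 d hd' h2d).mono
                    ((List.erase_sublist).trans (List.sublist_append_left _ _))
            · intro hlw
              have h1' : Lin t' (w₀.erase (tp c)) := by
                constructor
                · intro a b hab
                  have h2' := hlw.1 a b (hab.mono (List.sublist_cons_self _ _))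
                  have hbta : bt a ∈ t'.flatten := mem_flatten_of_mem_col hab.mem_left
                    (bt_mem (col_ne_nil (ht.tail.1 a hab.mem_left)))
                  have hbtb : bt b ∈ t'.flatten := mem_flatten_of_mem_col hab.mem_right
                    (bt_mem (col_ne_nil (ht.tail.1 b hab.mem_right)))
                  rcases bef_concat_iff.1 h2' with h3 | ⟨h3, h4⟩
                  · exact bef_erase_of_ne (hne_of_mem _ hbtb).2 (hne_of_mem _ hbta).2 h3
                  · exact absurd h4 (hne_of_mem _ hbta).1
                · intro d hd h2d
                  have h2' := hlw.2 d (List.mem_cons_of_mem _ hd) h2d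
                  have hbtd : bt d ∈ t'.flatten :=
                    mem_flatten_of_mem_col hd (bt_mem (col_ne_nil (ht.tail.1 d hd)))
                  have htpd : tp d ∈ t'.flatten :=
                    mem_flatten_of_mem_col hd (tp_mem (col_ne_nil (ht.tail.1 d hd)))
                  rcases bef_concat_iff.1 h2' with h3 | ⟨h3, h4⟩
                  · exact bef_erase_of_ne (hne_of_mem _ htpd).2 (hne_of_mem _ hbtd).2 h3
                  · exact absurd h4 (hne_of_mem _ hbtd).1
              rw [hiff.2 h1', hxz, ← hceq]
          · refine iff_of_false ?_ ?_
            · intro heq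
              injection heq with heq1 _
              rw [hceq] at heq1
              injection heq1 with _ heq3
              injection heq3 with heq4 _
              exact hxz heq4
            · intro hlw
              exact hxz (lin_last ht hw hperm hlw rfl)

/-! ### From `IsYFT` to `Std`, and the final assembly -/

theorem std_of_isYFT {n : ℕ} {t : List (List ℕ)} (ht : IsYFT n t) : Std t := by
  obtain ⟨h1, h2, h3, h4⟩ := ht
  refine ⟨h1, ?_, ?_, ?_⟩
  · intro c hc hlen
    have hch := h2 c hc
    rw [col_two hlen] at hch
    exact (List.isChain_cons_cons.1 hch).1
  · intro a b hab x hx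
    rcases bef_iff_split.1 hab with ⟨s, r, heq, has, hbr⟩
    rcases List.mem_iff_getElem.1 has with ⟨i, hi, hia⟩
    rcases List.mem_iff_getElem.1 hbr with ⟨j, hj, hjb⟩
    have hane : a ≠ [] := col_ne_nil (h1 a hab.mem_left)
    have hta : t.getD i [] = a := by
      rw [heq, List.getD_append _ _ _ _ hi, List.getD_eq_getElem _ _ hi, hia]
    have htb : t.getD (s.length + j) [] = b := by
      rw [heq, List.getD_append_right _ _ _ _ (by omega)]
      have : s.length + j - s.length = j := by omega
      rw [this, List.getD_eq_getElem _ _ hj, hjb]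
    have hlen : s.length + j < t.length := by
      have := congrArg List.length heq
      simp at this
      omega
    have := h3 i (s.length + j) (by omega) hlen (tp a) (by rw [hta, head?_eq_tp hane]; rfl) x
      (by rw [htb]; exact hx)
    exact this
  · exact h4.nodup_iff.2 List.nodup_range'

end YFProof

/-- the Young–Fibonacci class of `t` is exactly the interval
`[min(t), max(t)]` of the weak order on `S_n`. -/
theorem yf_class_eq_weak_order_interval (n : ℕ) (t : List (List ℕ))
    (ht : IsYFT n t) (w : List ℕ) (hw : w.Perm (List.range' 1 n)) :
    insertCols w = t ↔ WordWeakLe (minWord t) w ∧ WordWeakLe w (maxWord t) := by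
  have hstd : YFProof.Std t := YFProof.std_of_isYFT ht
  have hwnd : w.Nodup := hw.nodup_iff.2 List.nodup_range'
  have hflat : t.flatten.Perm (List.range' 1 n) := ht.2.2.2
  have hperm : w.Perm t.flatten := hw.trans hflat.symm
  have hminperm : (minWord t).Perm w := (YFProof.minWord_perm t).trans hperm.symm
  have hmaxperm : w.Perm (maxWord t) := hperm.trans (YFProof.maxWord_perm hstd.1).symm
  have hminnd : (minWord t).Nodup := hminperm.nodup_iff.2 hwnd
  constructor
  · intro heq
    have hlin : YFProof.Lin t w :=
      (YFProof.insert_iff_lin w.length t w le_rfl hstd hwnd hperm).1 heq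
    constructor
    · exact YFProof.wle_of_bef_mono (YFProof.disCard (minWord t) w) _ _ le_rfl hminnd hminperm
        (YFProof.F1 hstd hwnd hlin)
    · exact YFProof.wle_of_bef_mono (YFProof.disCard w (maxWord t)) _ _ le_rfl hwnd hmaxperm
        (YFProof.F2 hstd hwnd hperm hlin)
  · rintro ⟨h1, h2⟩
    have hmin : ∀ p q, q < p → YFProof.Bef (minWord t) p q → YFProof.Bef w p q :=
      fun p q hlt hb => YFProof.wordWeakLe_bef_mono h1 hlt hb
    have hmax : ∀ p q, q < p → YFProof.Bef w p q → YFProof.Bef (maxWord t) p q :=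
      fun p q hlt hb => YFProof.wordWeakLe_bef_mono h2 hlt hb
    exact (YFProof.insert_iff_lin w.length t w le_rfl hstd hwnd hperm).2
      (YFProof.F3 hstd hwnd hperm hmin hmax)
end

section
/- Let t be a standard Young-Fibonacci tableau of size n. Then the Young-Fibonacci class of t equals the set of linear extensions of the canonical poset P_t; that is, for every permutation σ of {1,…,n}, P(σ) = t if and only if σ is a linear extension of P_t. -/
/-! ### Auxiliary lemmas for the proof -/

section YFAux
open List

private lemma auxNil (N : ℕ) : insertColsAux N [] = [] := by cases N <;> rfl

private lemma auxSucc (N : ℕ) (w : List ℕ) (hw : w ≠ []) :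
    insertColsAux (N+1) w =
      match (w.dropLast.filter (fun y => decide (w.getLast! < y))).max? with
      | none => [w.getLast!] :: insertColsAux N w.dropLast
      | some m => [m, w.getLast!] :: insertColsAux N (w.dropLast.erase m) := by
  cases w with
  | nil => exact absurd rfl hw
  | cons a as => rfl

private lemma auxFuel : ∀ (N M : ℕ) (w : List ℕ), w.length ≤ N → w.length ≤ M →
    insertColsAux N w = insertColsAux M w := by
  intro N
  induction N with
  | zero =>
    intro M w h _
    rw [List.length_eq_zero_iff.mp (Nat.le_zero.mp h), auxNil, auxNil]
  | succ N ih =>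
    intro M w hN hM
    cases w with
    | nil => rw [auxNil, auxNil]
    | cons a as =>
      obtain ⟨M', rfl⟩ : ∃ M', M = M' + 1 := ⟨M - 1, by simp at hM; omega⟩
      rw [auxSucc N _ (by simp), auxSucc M' _ (by simp)]
      have hdl : (a :: as).dropLast.length = as.length := by simp
      have h1 : (a :: as).dropLast.length ≤ N := by simp at hN ⊢; omega
      have h2 : (a :: as).dropLast.length ≤ M' := by simp at hM ⊢; omega
      cases h : ((a :: as).dropLast.filter (fun y => decide ((a :: as).getLast! < y))).max? with
      | none => simp only [h]; rw [ih _ _ h1 h2]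
      | some m =>
        simp only [h]
        rw [ih _ _ (le_trans (List.length_erase_le) h1)
          (le_trans (List.length_erase_le) h2)]


private lemma getLastBangConcat (l : List ℕ) (x : ℕ) : (l ++ [x]).getLast! = x :=
  List.getLast!_of_getLast? (by simp)

private lemma insertCols_concat_none (w₀ : List ℕ) (x : ℕ)
    (h : (w₀.filter (fun y => decide (x < y))).max? = none) :
    insertCols (w₀ ++ [x]) = [x] :: insertCols w₀ := by
  have hlen : (w₀ ++ [x]).length = w₀.length + 1 := by simp
  rw [insertCols, hlen, auxSucc _ _ (by simp)]
  simp only [List.dropLast_concat, getLastBangConcat, h]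
  rfl

private lemma insertCols_concat_some (w₀ : List ℕ) (x m : ℕ)
    (h : (w₀.filter (fun y => decide (x < y))).max? = some m) :
    insertCols (w₀ ++ [x]) = [m, x] :: insertCols (w₀.erase m) := by
  have hlen : (w₀ ++ [x]).length = w₀.length + 1 := by simp
  rw [insertCols, hlen, auxSucc _ _ (by simp)]
  simp only [List.dropLast_concat, getLastBangConcat, h]
  rw [insertCols, auxFuel w₀.length _ _ (List.length_erase_le) le_rfl]

end YFAux

section YFAux2
open List

private lemma idx_concat_self {w₀ : List ℕ} {x : ℕ} (h : x ∉ w₀) :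
    (w₀ ++ [x]).idxOf x = w₀.length := by
  rw [List.idxOf_append_of_notMem h, List.idxOf_cons_self]
  omega

private lemma idx_inj_mem {w : List ℕ} {a b : ℕ} (ha : a ∈ w) (hb : b ∈ w)
    (h : w.idxOf a = w.idxOf b) : a = b := by
  have h1 := List.getElem_idxOf (List.idxOf_lt_length_iff.mpr ha)
  have h2 := List.getElem_idxOf (List.idxOf_lt_length_iff.mpr hb)
  simp only [h] at h1
  exact h1.symm.trans h2

private lemma idx_erase_iff : ∀ (l : List ℕ), l.Nodup → ∀ {m a b : ℕ},
    a ∈ l.erase m → b ∈ l.erase m →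
    ((l.erase m).idxOf a < (l.erase m).idxOf b ↔ l.idxOf a < l.idxOf b) := by
  intro l
  induction l with
  | nil => intro _ m a b ha; simp [List.erase_nil] at ha
  | cons c l ih =>
    intro hl m a b ha hb
    rcases List.nodup_cons.mp hl with ⟨hcl, hln⟩
    by_cases hcm : c = m
    · subst hcm
      rw [List.erase_cons_head] at ha hb ⊢
      have hac : a ≠ c := fun h => hcl (h ▸ ha)
      have hbc : b ≠ c := fun h => hcl (h ▸ hb)
      rw [List.idxOf_cons_ne l (Ne.symm hac), List.idxOf_cons_ne l (Ne.symm hbc)]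
      omega
    · rw [List.erase_cons_tail (a := m) (b := c) (by simpa using hcm)] at ha hb ⊢
      by_cases hac : a = c
      · subst hac
        rw [List.idxOf_cons_self, List.idxOf_cons_self]
        by_cases hbc : b = a
        · subst hbc; simp
        · rw [List.idxOf_cons_ne _ (Ne.symm hbc), List.idxOf_cons_ne _ (Ne.symm hbc)]
          omega
      · by_cases hbc : b = c
        · subst hbc
          rw [List.idxOf_cons_self, List.idxOf_cons_self]; omega
        · rw [List.idxOf_cons_ne _ (Ne.symm hac), List.idxOf_cons_ne _ (Ne.symm hbc),
            List.idxOf_cons_ne _ (Ne.symm hac), List.idxOf_cons_ne _ (Ne.symm hbc)]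
          have := ih hln ((List.mem_cons.mp ha).resolve_left hac)
            ((List.mem_cons.mp hb).resolve_left hbc)
          omega

private lemma bottomRow_cons (c : List ℕ) (hc : c ≠ []) (t : List (List ℕ)) :
    bottomRow (c :: t) = c.getLast hc :: bottomRow t := by
  rw [bottomRow, List.filterMap_cons, List.getLast?_eq_getLast hc, bottomRow]

private lemma mem_flatten_of_mem_bottomRow {t : List (List ℕ)} {x : ℕ}
    (h : x ∈ bottomRow t) : x ∈ t.flatten := by
  rw [bottomRow, List.mem_filterMap] at h
  obtain ⟨c, hc, hx⟩ := h
  exact List.mem_flatten.mpr ⟨c, hc, List.mem_of_getLast? hx⟩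

private lemma bottomRow_length {t : List (List ℕ)} (h : ∀ c ∈ t, c ≠ []) :
    (bottomRow t).length = t.length := by
  induction t with
  | nil => rfl
  | cons c t ih =>
    rw [bottomRow_cons c (h c (by simp)) t, List.length_cons, List.length_cons,
      ih (fun d hd => h d (List.mem_cons_of_mem _ hd))]

private lemma bottomRow_getD {t : List (List ℕ)} (h : ∀ c ∈ t, c ≠ []) :
    ∀ j, j < t.length → (t.getD j []).getLast? = some ((bottomRow t).getD j 0) := by
  induction t with
  | nil => intro j hj; simp at hj
  | cons c t ih =>
    intro j hj
    have hc : c ≠ [] := h c (by simp)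
    rw [bottomRow_cons c hc t]
    cases j with
    | zero => simpa using List.getLast?_eq_getLast hc
    | succ j =>
      simp only [List.getD_cons_succ]
      exact ih (fun d hd => h d (List.mem_cons_of_mem _ hd)) j (by simpa using hj)

private lemma bottomRow_nodup {t : List (List ℕ)} (hn : t.flatten.Nodup)
    (h : ∀ c ∈ t, c ≠ []) : (bottomRow t).Nodup := by
  induction t with
  | nil => exact List.nodup_nil
  | cons c t ih =>
    rw [List.flatten_cons, List.nodup_append] at hn
    obtain ⟨hc, ht, hdisj⟩ := hn
    rw [bottomRow_cons c (h c (by simp)) t, List.nodup_cons]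
    refine ⟨fun hmem => ?_, ih ht (fun d hd => h d (List.mem_cons_of_mem _ hd))⟩
    exact hdisj _ (List.getLast_mem _) _ (mem_flatten_of_mem_bottomRow hmem) rfl

end YFAux2

section YFAux3
open List

private def Hyps (t : List (List ℕ)) : Prop :=
  (∀ c ∈ t, c.length = 1 ∨ c.length = 2) ∧
  (∀ c ∈ t, List.Chain' (fun a b => b < a) c) ∧
  (∀ i j : ℕ, i < j → j < t.length →
    ∀ a ∈ (t.getD i []).head?, ∀ x ∈ t.getD j [], x < a) ∧
  t.flatten.Nodup

private def GenCond (t : List (List ℕ)) (w : List ℕ) : Prop :=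
  ∀ x y : ℕ, canoGen t x y → w.idxOf x < w.idxOf y

private lemma hyps_ne {t : List (List ℕ)} (h : Hyps t) : ∀ c ∈ t, c ≠ [] := by
  intro c hc he
  rcases h.1 c hc with h1 | h1 <;> (rw [he] at h1; simp at h1)

private lemma hyps_cons {c : List ℕ} {t : List (List ℕ)} (h : Hyps (c :: t)) : Hyps t := by
  obtain ⟨h1, h2, h3, h4⟩ := h
  refine ⟨fun d hd => h1 d (List.mem_cons_of_mem _ hd),
    fun d hd => h2 d (List.mem_cons_of_mem _ hd), ?_, ?_⟩
  · intro i j hij hj a hha x hx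
    exact h3 (i+1) (j+1) (by omega) (by simpa using hj) a (by simpa using hha) x
      (by simpa [List.getD_cons_succ] using hx)
  · rw [List.flatten_cons, List.nodup_append] at h4; exact h4.2.1

private lemma hyps_head_max {c : List ℕ} {t : List (List ℕ)} (h : Hyps (c :: t)) {a : ℕ}
    (hha : c.head? = some a) : ∀ e ∈ t.flatten, e < a := by
  intro e he
  obtain ⟨d, hd, hed⟩ := List.mem_flatten.mp he
  obtain ⟨j, hj, hdj⟩ := List.mem_iff_getElem.mp hd
  refine h.2.2.1 0 (j+1) (by omega) (by simpa using hj) a (by simpa using hha) e ?_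
  simp only [List.getD_cons_succ]
  rw [List.getD_eq_getElem _ _ hj, hdj]
  exact hed

private lemma mem_of_head? {l : List ℕ} {a : ℕ} (h : l.head? = some a) : a ∈ l := by
  cases l with
  | nil => simp at h
  | cons b l => simp at h; simp [h]

private lemma canoGen_cons_of {c : List ℕ} (hc : c ≠ []) {t : List (List ℕ)} {x y : ℕ}
    (h : canoGen t x y) : canoGen (c :: t) x y := by
  rcases h with ⟨i, hi, hx, hy⟩ | ⟨d, hd, h2⟩
  · left
    rw [bottomRow_cons c hc t]
    exact ⟨i+1, by simp only [List.length_cons]; omega,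
      by simpa [List.getD_cons_succ] using hx, by simpa [List.getD_cons_succ] using hy⟩
  · exact Or.inr ⟨d, List.mem_cons_of_mem _ hd, h2⟩

private lemma canoGen_cons_elim {c : List ℕ} (hc : c ≠ []) {t : List (List ℕ)} {x y : ℕ}
    (h : canoGen (c :: t) x y) :
    (0 < (bottomRow t).length ∧ x = (bottomRow t).getD 0 0 ∧ y = c.getLast hc) ∨
    (c.length = 2 ∧ c.head? = some x ∧ c.getLast? = some y) ∨ canoGen t x y := by
  rcases h with ⟨i, hi, hx, hy⟩ | ⟨d, hd, h2⟩
  · rw [bottomRow_cons c hc t] at hi hx hy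
    cases i with
    | zero =>
      left
      refine ⟨by simpa using hi, ?_, ?_⟩
      · rw [← hx]; simp [List.getD_cons_succ]
      · rw [← hy]; simp
    | succ k =>
      refine Or.inr (Or.inr (Or.inl ⟨k, by simpa using hi, ?_, ?_⟩))
      · simpa [List.getD_cons_succ] using hx
      · simpa [List.getD_cons_succ] using hy
  · rcases List.mem_cons.mp hd with rfl | hdt
    · exact Or.inr (Or.inl h2)
    · exact Or.inr (Or.inr (Or.inr ⟨d, hdt, h2⟩))

private lemma canoGen_mem {t : List (List ℕ)} (hne : ∀ c ∈ t, c ≠ []) {x y : ℕ}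
    (h : canoGen t x y) : x ∈ t.flatten ∧ y ∈ t.flatten := by
  rcases h with ⟨i, hi, hx, hy⟩ | ⟨d, hd, _, hx, hy⟩
  · constructor
    · apply mem_flatten_of_mem_bottomRow
      rw [← hx, List.getD_eq_getElem _ _ hi]; exact List.getElem_mem hi
    · apply mem_flatten_of_mem_bottomRow
      have hi' : i < (bottomRow t).length := by omega
      rw [← hy, List.getD_eq_getElem _ _ hi']; exact List.getElem_mem hi'
  · exact ⟨List.mem_flatten.mpr ⟨d, hd, List.mem_of_head? hx⟩,
      List.mem_flatten.mpr ⟨d, hd, List.mem_of_getLast? hy⟩⟩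

private lemma canoGen_ne {t : List (List ℕ)} (h : Hyps t) {x y : ℕ}
    (hg : canoGen t x y) : x ≠ y := by
  rcases hg with ⟨i, hi, hx, hy⟩ | ⟨d, hd, hlen, hx, hy⟩
  · have hnd := bottomRow_nodup h.2.2.2 (hyps_ne h)
    intro he
    have hii : i < (bottomRow t).length := by omega
    rw [← hx, ← hy, List.getD_eq_getElem _ _ hi, List.getD_eq_getElem _ _ hii] at he
    have := (List.Nodup.getElem_inj_iff hnd).mp he
    omega
  · obtain ⟨p, q, rfl⟩ := List.length_eq_two.mp hlen
    have hqp : q < p := (List.isChain_cons_cons.mp (h.2.1 _ hd)).1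
    have hxp : x = p := by simpa using hx.symm
    have hyq : y = q := by simpa using hy.symm
    omega

private lemma genCond_iff_isLinExt {t : List (List ℕ)} {w : List ℕ} (h : Hyps t) :
    GenCond t w ↔ IsLinExt t w := by
  constructor
  · intro hg x y hxy hne
    have key : ∀ a b : ℕ, Relation.ReflTransGen (canoGen t) a b →
        a = b ∨ w.idxOf a < w.idxOf b := by
      intro a b hab
      induction hab with
      | refl => exact Or.inl rfl
      | tail _ h2 ih =>
        rcases ih with rfl | hlt
        · exact Or.inr (hg _ _ h2)
        · exact Or.inr (lt_trans hlt (hg _ _ h2))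
    rcases key x y hxy with rfl | hlt
    · exact absurd rfl hne
    · exact hlt
  · intro hl x y hxy
    exact hl x y (Relation.ReflTransGen.single hxy) (canoGen_ne h hxy)

private lemma gencond_last {c : List ℕ} {t : List (List ℕ)} {w : List ℕ}
    (hH : Hyps (c :: t)) (hP : w.Perm (c :: t).flatten) (hG : GenCond (c :: t) w)
    (hw : w ≠ []) (hc : c ≠ []) : w.getLast hw = c.getLast hc := by
  have hcne : ∀ d ∈ (c :: t), d ≠ [] := hyps_ne hH
  have hnd : w.Nodup := hP.symm.nodup hH.2.2.2
  have hbrlen : (bottomRow (c :: t)).length = (c :: t).length := bottomRow_length hcne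
  have hb0 : (bottomRow (c :: t)).getD 0 0 = c.getLast hc := by
    rw [bottomRow_cons c hc t]; rfl
  have hbmem : (c.getLast hc) ∈ w :=
    (hP.mem_iff).mpr (List.mem_flatten.mpr ⟨c, by simp, List.getLast_mem hc⟩)
  have step1 : ∀ j, j < (bottomRow (c :: t)).length →
      w.idxOf ((bottomRow (c :: t)).getD j 0) ≤ w.idxOf (c.getLast hc) := by
    intro j
    induction j with
    | zero => intro _; rw [hb0]
    | succ k ih =>
      intro hk
      have hlt := hG _ _ (Or.inl ⟨k, hk, rfl, rfl⟩)
      exact le_trans (le_of_lt hlt) (ih (by omega))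
  have hmax : ∀ e ∈ w, e ≠ c.getLast hc → w.idxOf e < w.idxOf (c.getLast hc) := by
    intro e he hne
    obtain ⟨d, hd, hed⟩ := List.mem_flatten.mp ((hP.mem_iff).mp he)
    obtain ⟨j, hj, hdj⟩ := List.mem_iff_getElem.mp hd
    have hgetD : (c :: t).getD j [] = d := by rw [List.getD_eq_getElem _ _ hj, hdj]
    have hbj : d.getLast? = some ((bottomRow (c :: t)).getD j 0) := by
      rw [← hgetD]; exact bottomRow_getD hcne j hj
    have hjlt : j < (bottomRow (c :: t)).length := by omega
    rcases hH.1 d hd with h1 | h2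
    · obtain ⟨u, rfl⟩ := List.length_eq_one_iff.mp h1
      have heu : e = u := by simpa using hed
      subst heu
      have heb : (bottomRow (c :: t)).getD j 0 = e := by simpa using hbj.symm
      have hle := step1 j hjlt
      rw [heb] at hle
      exact lt_of_le_of_ne hle (fun hh => hne (idx_inj_mem he hbmem hh))
    · obtain ⟨p, q, rfl⟩ := List.length_eq_two.mp h2
      have hqb : q = (bottomRow (c :: t)).getD j 0 := by simpa using hbj
      have hle := step1 j hjlt
      rw [← hqb] at hle
      rcases (by simpa using hed : e = p ∨ e = q) with rfl | rfl
      · exact lt_of_lt_of_le (hG e q (Or.inr ⟨[e, q], hd, rfl, rfl, by simp⟩)) hle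
      · exact lt_of_le_of_ne hle (fun hh => hne (idx_inj_mem he hbmem hh))
  by_contra hcon
  have h1 := hmax _ (List.getLast_mem hw) hcon
  have h2 : w.idxOf (w.getLast hw) = w.length - 1 := by
    rw [List.getLast_eq_getElem]
    exact hnd.idxOf_getElem _ _
  have h3 : w.idxOf (c.getLast hc) < w.length := List.idxOf_lt_length_iff.mpr hbmem
  have h4 : w.length ≠ 0 := by
    intro hz; exact hw (List.length_eq_zero_iff.mp hz)
  omega

private lemma perm_cancel_concat {w₀ l : List ℕ} {a : ℕ} (h : (w₀ ++ [a]).Perm (a :: l)) :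
    w₀.Perm l :=
  (List.perm_append_right_iff [a]).mp (h.trans (List.perm_append_singleton a l).symm)

end YFAux3

section YFAux4
open List

private lemma main_nil (w : List ℕ) (hP : w.Perm (([] : List (List ℕ)).flatten)) :
    insertCols w = [] ↔ GenCond [] w := by
  have hw : w = [] := hP.eq_nil
  subst hw
  constructor
  · intro _ p q hg
    rcases hg with ⟨i, hi, _⟩ | ⟨d, hd, _⟩
    · simp [bottomRow] at hi
    · simp at hd
  · intro _; rfl

private lemma main_lemma : ∀ (N : ℕ) (w : List ℕ) (t : List (List ℕ)), w.length ≤ N →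
    Hyps t → w.Perm t.flatten → (insertCols w = t ↔ GenCond t w) := by
  intro N
  induction N with
  | zero =>
    intro w t hlen hH hP
    have hw : w = [] := List.length_eq_zero_iff.mp (Nat.le_zero.mp hlen)
    subst hw
    cases t with
    | nil => exact main_nil [] hP
    | cons c t =>
      exfalso
      have hc : c ≠ [] := hyps_ne hH c (by simp)
      have hlen2 := hP.length_eq
      rw [List.flatten_cons, List.length_append] at hlen2
      have : c.length ≠ 0 := fun hz => hc (List.length_eq_zero_iff.mp hz)
      simp at hlen2
      omega
  | succ N ih =>
    intro w t hlen hH hP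
    cases t with
    | nil => exact main_nil w hP
    | cons c t =>
      have hcne : ∀ d ∈ (c :: t), d ≠ [] := hyps_ne hH
      have hc : c ≠ [] := hcne c (by simp)
      have hwne : w ≠ [] := by
        intro h; subst h
        have h0 := hP.length_eq
        rw [List.flatten_cons, List.length_append] at h0
        have : c.length ≠ 0 := fun hz => hc (List.length_eq_zero_iff.mp hz)
        simp at h0
        omega
      obtain ⟨w₀, x, rfl⟩ : ∃ w₀ x, w = w₀ ++ [x] :=
        ⟨w.dropLast, w.getLast hwne, (List.dropLast_append_getLast hwne).symm⟩
      have hndw : (w₀ ++ [x]).Nodup := hP.symm.nodup hH.2.2.2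
      have hnd0 : w₀.Nodup := (List.nodup_append.mp hndw).1
      have hxw0 : x ∉ w₀ := by
        intro hx
        exact (List.nodup_append.mp hndw).2.2 _ hx _ (by simp) rfl
      have hlen0 : w₀.length ≤ N := by
        rw [List.length_append] at hlen; simpa using hlen
      have hH' : Hyps t := hyps_cons hH
      have hGb : GenCond (c :: t) (w₀ ++ [x]) → x = c.getLast hc := by
        intro hG
        have h1 := gencond_last hH hP hG (by simp) hc
        rwa [List.getLast_concat] at h1
      rcases hH.1 c (by simp) with hc1 | hc2
      · -- height-1 first column
        obtain ⟨b, rfl⟩ := List.length_eq_one_iff.mp hc1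
        have hflat : (([b] : List ℕ) :: t).flatten = b :: t.flatten := by simp
        have hbmaxf : ∀ e ∈ t.flatten, e < b := hyps_head_max hH rfl
        have hPb : (w₀ ++ [x]).Perm (b :: t.flatten) := by rwa [hflat] at hP
        constructor
        · intro hins
          cases hmaxq : (w₀.filter (fun y => decide (x < y))).max? with
          | some m =>
            rw [insertCols_concat_some w₀ x m hmaxq] at hins
            injection hins with h1 _
            exact absurd h1 (by simp)
          | none =>
            rw [insertCols_concat_none w₀ x hmaxq] at hins
            injection hins with h1 h2
            have hxb : x = b := by injection h1
            subst hxb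
            have hP' : w₀.Perm t.flatten := perm_cancel_concat hPb
            have hG' := (ih w₀ t hlen0 hH' hP').mp h2
            intro p q hpq
            rcases canoGen_cons_elim hc hpq with ⟨hlen1, hp, hq⟩ | ⟨hlen2, _, _⟩ | hpq'
            · have hpm : p ∈ w₀ := by
                apply (hP'.mem_iff).mpr
                apply mem_flatten_of_mem_bottomRow
                rw [hp, List.getD_eq_getElem _ _ hlen1]
                exact List.getElem_mem hlen1
              have hqb : q = x := by rw [hq]; rfl
              rw [hqb, List.idxOf_append_of_mem hpm, idx_concat_self hxw0]
              exact List.idxOf_lt_length_iff.mpr hpm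
            · simp at hlen2
            · have hp := ((hP'.mem_iff).mpr (canoGen_mem (hyps_ne hH') hpq').1)
              have hq := ((hP'.mem_iff).mpr (canoGen_mem (hyps_ne hH') hpq').2)
              rw [List.idxOf_append_of_mem hp, List.idxOf_append_of_mem hq]
              exact hG' p q hpq'
        · intro hG
          have hxb : x = b := hGb hG
          subst hxb
          have hP' : w₀.Perm t.flatten := perm_cancel_concat hPb
          have hfil : w₀.filter (fun y => decide (x < y)) = [] := by
            rw [List.filter_eq_nil_iff]
            intro y hy
            have hyf : y ∈ t.flatten := (hP'.mem_iff).mp hy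
            simpa using le_of_lt (hbmaxf y hyf)
          rw [insertCols_concat_none w₀ x (by rw [hfil]; rfl)]
          congr 1
          apply (ih w₀ t hlen0 hH' hP').mpr
          intro p q hpq
          have hlt := hG p q (canoGen_cons_of hc hpq)
          have hp := ((hP'.mem_iff).mpr (canoGen_mem (hyps_ne hH') hpq).1)
          have hq := ((hP'.mem_iff).mpr (canoGen_mem (hyps_ne hH') hpq).2)
          rwa [List.idxOf_append_of_mem hp, List.idxOf_append_of_mem hq] at hlt
      · -- height-2 first column
        obtain ⟨m, b, rfl⟩ := List.length_eq_two.mp hc2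
        have hbm : b < m := (List.isChain_cons_cons.mp (hH.2.1 [m, b] (List.mem_cons_self))).1
        have hmmax : ∀ e ∈ t.flatten, e < m := hyps_head_max hH rfl
        have hflat : (([m, b] : List ℕ) :: t).flatten = m :: b :: t.flatten := by simp
        have hPb : (w₀ ++ [x]).Perm (m :: b :: t.flatten) := by rwa [hflat] at hP
        have hgl : ([m, b] : List ℕ).getLast hc = b := rfl
        constructor
        · intro hins
          cases hmaxq : (w₀.filter (fun y => decide (x < y))).max? with
          | none =>
            rw [insertCols_concat_none w₀ x hmaxq] at hins
            injection hins with h1 _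
            exact absurd h1 (by simp)
          | some m' =>
            rw [insertCols_concat_some w₀ x m' hmaxq] at hins
            injection hins with h1 h2
            injection h1 with e1 e2
            injection e2 with e3 _
            subst e1
            subst e3
            have hP0 : w₀.Perm (m' :: t.flatten) :=
              perm_cancel_concat (hPb.trans (List.Perm.swap x m' t.flatten))
            have hPe : (w₀.erase m').Perm t.flatten := by
              have := hP0.erase m'
              rwa [List.erase_cons_head] at this
            have hG' := (ih (w₀.erase m') t
              (le_trans (List.length_erase_le) hlen0) hH' hPe).mp h2
            intro p q hpq
            rcases canoGen_cons_elim hc hpq with ⟨hlen1, hp, hq⟩ | ⟨_, hhp, hhq⟩ | hpq'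
            · have hpm : p ∈ w₀ := by
                apply (hP0.mem_iff).mpr
                apply List.mem_cons_of_mem
                apply mem_flatten_of_mem_bottomRow
                rw [hp, List.getD_eq_getElem _ _ hlen1]
                exact List.getElem_mem hlen1
              have hqb : q = x := by rw [hq, hgl]
              rw [hqb, List.idxOf_append_of_mem hpm, idx_concat_self hxw0]
              exact List.idxOf_lt_length_iff.mpr hpm
            · have hpm2 : p = m' := by simpa using hhp.symm
              have hqb : q = x := by simpa using hhq.symm
              have hmw : m' ∈ w₀ := (hP0.mem_iff).mpr (by simp)
              subst hpm2; subst hqb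
              rw [List.idxOf_append_of_mem hmw, idx_concat_self hxw0]
              exact List.idxOf_lt_length_iff.mpr hmw
            · have hp := ((hPe.mem_iff).mpr (canoGen_mem (hyps_ne hH') hpq').1)
              have hq := ((hPe.mem_iff).mpr (canoGen_mem (hyps_ne hH') hpq').2)
              have hlt := hG' p q hpq'
              rw [idx_erase_iff w₀ hnd0 hp hq] at hlt
              rw [List.idxOf_append_of_mem (List.mem_of_mem_erase hp),
                List.idxOf_append_of_mem (List.mem_of_mem_erase hq)]
              exact hlt
        · intro hG
          have hxb : x = b := by rw [hGb hG, hgl]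
          subst hxb
          have hP0 : w₀.Perm (m :: t.flatten) :=
            perm_cancel_concat (hPb.trans (List.Perm.swap x m t.flatten))
          have hPe : (w₀.erase m).Perm t.flatten := by
            have := hP0.erase m
            rwa [List.erase_cons_head] at this
          have hmw : m ∈ w₀ := (hP0.mem_iff).mpr (by simp)
          have hfil : (w₀.filter (fun y => decide (x < y))).max? = some m := by
            rw [List.max?_eq_some_iff]
            constructor
            · rw [List.mem_filter]
              exact ⟨hmw, by simpa using hbm⟩
            · intro y hy
              have hyw : y ∈ w₀ := (List.mem_filter.mp hy).1
              rcases List.mem_cons.mp ((hP0.mem_iff).mp hyw) with rfl | hyf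
              · exact le_rfl
              · exact le_of_lt (hmmax y hyf)
          rw [insertCols_concat_some w₀ x m hfil]
          congr 1
          apply (ih (w₀.erase m) t (le_trans (List.length_erase_le) hlen0) hH' hPe).mpr
          intro p q hpq
          have hlt := hG p q (canoGen_cons_of hc hpq)
          have hp := ((hPe.mem_iff).mpr (canoGen_mem (hyps_ne hH') hpq).1)
          have hq := ((hPe.mem_iff).mpr (canoGen_mem (hyps_ne hH') hpq).2)
          rw [List.idxOf_append_of_mem (List.mem_of_mem_erase hp),
            List.idxOf_append_of_mem (List.mem_of_mem_erase hq)] at hlt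
          exact (idx_erase_iff w₀ hnd0 hp hq).mpr hlt

end YFAux4
/-- the Young–Fibonacci class of `t` is exactly the set of linear
extensions of the canonical poset `P_t`. -/
theorem yf_class_eq_linear_extensions (n : ℕ) (t : List (List ℕ))
    (ht : IsYFT n t) (w : List ℕ) (hw : w.Perm (List.range' 1 n)) :
    insertCols w = t ↔ IsLinExt t w := by
  have hnd : t.flatten.Nodup := ht.2.2.2.symm.nodup (List.nodup_range' (s := 1) (n := n))
  have hH : Hyps t := ⟨ht.1, ht.2.1, ht.2.2.1, hnd⟩
  have hP : w.Perm t.flatten := hw.trans ht.2.2.2.symm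
  rw [main_lemma w.length w t le_rfl hH hP]
  exact genCond_iff_isLinExt hH
end
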